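/- arXiv:2006.16986 — 8 statements merged into one kernel-verified Lean document; each statement's English description precedes it below -/
import Mathlib

section
/- Let f : ℝⁿ → ℝ be differentiable with gradient ∇f, and suppose there are constants 0 < μ ≤ L such that (μ/2)‖x − y‖² ≤ f(x) − f(y) − ⟨∇f(y), x − y⟩ ≤ (L/2)‖x − y‖² for all x, y ∈ ℝⁿ. Let x* be a global minimizer of f and set β = (√L − √μ)/(√L + √μ). Given x⁰ ∈ ℝⁿ, define sequences (xᵏ) and (yᵏ) by y⁰ = x⁰ and, for every k ≥ 1, yᵏ = xᵏ⁻¹ − (1/L)∇f(xᵏ⁻¹) and xᵏ = yᵏ + β(yᵏ − yᵏ⁻¹). Then for every k ≥ 0, the gradient-step iterates satisfy f(yᵏ) − f(x*) ≤ (1 − √(μ/L))ᵏ · ( f(x⁰) − f(x*) + (μ/2)‖x⁰ − x*‖² ). -/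
set_option maxHeartbeats 1000000


open RealInnerProductSpace

/-- Nesterov's constant-momentum accelerated gradient method on a μ-strongly convex,
L-smooth function: convergence estimate for the gradient-step iterates `y k`. -/
theorem nesterov_acceleration_convergence
    (n : ℕ) (f : EuclideanSpace ℝ (Fin n) → ℝ)
    (f' : EuclideanSpace ℝ (Fin n) → EuclideanSpace ℝ (Fin n))
    (hf : ∀ x, HasGradientAt f (f' x) x)
    (μ L : ℝ) (hμ : 0 < μ) (hμL : μ ≤ L)
    (hlow : ∀ x y : EuclideanSpace ℝ (Fin n),
      μ / 2 * ‖x - y‖ ^ 2 ≤ f x - f y - ⟪f' y, x - y⟫)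
    (hup : ∀ x y : EuclideanSpace ℝ (Fin n),
      f x - f y - ⟪f' y, x - y⟫ ≤ L / 2 * ‖x - y‖ ^ 2)
    (xstar : EuclideanSpace ℝ (Fin n)) (hxstar : ∀ z, f xstar ≤ f z)
    (β : ℝ) (hβ : β = (Real.sqrt L - Real.sqrt μ) / (Real.sqrt L + Real.sqrt μ))
    (x y : ℕ → EuclideanSpace ℝ (Fin n))
    (hy0 : y 0 = x 0)
    (hy : ∀ k : ℕ, y (k + 1) = x k - (1 / L) • f' (x k))
    (hx : ∀ k : ℕ, x (k + 1) = y (k + 1) + β • (y (k + 1) - y k)) :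
    ∀ k : ℕ, f (y k) - f xstar ≤
      (1 - Real.sqrt (μ / L)) ^ k *
        (f (x 0) - f xstar + μ / 2 * ‖x 0 - xstar‖ ^ 2) := by
  have hL : 0 < L := hμ.trans_le hμL
  set τ : ℝ := Real.sqrt (μ / L) with hτdef
  have hτpos : 0 < τ := Real.sqrt_pos.mpr (div_pos hμ hL)
  have hτ1 : τ ≤ 1 := Real.sqrt_le_one.mpr ((div_le_one hL).mpr hμL)
  have hτ2 : τ ^ 2 = μ / L := Real.sq_sqrt (div_pos hμ hL).le
  have hμeq : μ = τ ^ 2 * L := by rw [hτ2]; field_simp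
  -- β in terms of τ
  have hsL : (0:ℝ) < Real.sqrt L := Real.sqrt_pos.mpr hL
  have hsμ : (0:ℝ) < Real.sqrt μ := Real.sqrt_pos.mpr hμ
  have hτμL : τ = Real.sqrt μ / Real.sqrt L := Real.sqrt_div hμ.le L
  have hβ' : β = (1 - τ) / (1 + τ) := by
    rw [hβ, hτμL]
    rw [div_eq_div_iff (by positivity) (by positivity)]
    field_simp
  have h1τ : (0:ℝ) < 1 + τ := by linarith
  -- the auxiliary sequence
  set z : ℕ → EuclideanSpace ℝ (Fin n) := fun k => x k + (1/τ) • (x k - y k) with hzdef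
  have hz0 : z 0 = x 0 := by simp [hzdef, hy0]
  -- potential
  set Φ : ℕ → ℝ := fun k => f (y k) - f xstar + μ / 2 * ‖z k - xstar‖ ^ 2 with hΦdef
  have hΦ0 : Φ 0 = f (x 0) - f xstar + μ / 2 * ‖x 0 - xstar‖ ^ 2 := by
    simp [hΦdef, hz0, hy0]
  -- one-step decrease of the potential
  have hstep : ∀ k : ℕ, Φ (k+1) ≤ (1 - τ) * Φ k := by
    intro k
    set g : EuclideanSpace ℝ (Fin n) := f' (x k) with hgdef
    set u : EuclideanSpace ℝ (Fin n) := z k - xstar with hudef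
    set v : EuclideanSpace ℝ (Fin n) := x k - xstar with hvdef
    set a : EuclideanSpace ℝ (Fin n) := (1 - τ) • u + τ • v with hadef
    set s1 : ℝ := ⟪x k - xstar, g⟫ with hs1def
    set s2 : ℝ := ⟪x k - y k, g⟫ with hs2def
    -- vector identity for z (k+1)
    have ha : z (k+1) - xstar = a - (τ/μ) • g := by
      rw [hadef, hudef, hvdef, hzdef]
      simp only
      rw [hx k, hy k, hβ', hμeq]
      match_scalars <;> field_simp <;> ring
    -- (i) descent from the gradient step
    have hi : f (y (k+1)) ≤ f (x k) - 1/(2*L) * ‖g‖^2 := by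
      have h := hup (y (k+1)) (x k)
      have hd : y (k+1) - x k = -((1/L) • g) := by rw [hy k]; module
      rw [hd] at h
      rw [inner_neg_right, real_inner_smul_right, real_inner_self_eq_norm_sq] at h
      rw [norm_neg, norm_smul, Real.norm_eq_abs, mul_pow, sq_abs] at h
      have h3 : L/2 * ((1/L)^2 * ‖g‖^2) - 1/L * ‖g‖^2 = - (1/(2*L) * ‖g‖^2) := by
        field_simp; ring
      linarith
    -- (ii) strong convexity at xstar
    have hii : -s1 ≤ f xstar - f (x k) - μ/2 * ‖x k - xstar‖^2 := by
      have h := hlow xstar (x k)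
      have h2 : ⟪g, xstar - x k⟫ = -s1 := by
        rw [hs1def, ← neg_sub (x k) xstar, inner_neg_right, real_inner_comm]
      rw [h2, norm_sub_rev] at h
      linarith
    -- (iii) strong convexity at y k
    have hiii : -s2 ≤ f (y k) - f (x k) := by
      have h := hlow (y k) (x k)
      have h2 : ⟪g, y k - x k⟫ = -s2 := by
        rw [hs2def, ← neg_sub (x k) (y k), inner_neg_right, real_inner_comm]
      rw [h2] at h
      have h3 : (0:ℝ) ≤ μ/2 * ‖y k - x k‖^2 := by positivity
      linarith
    -- inner product expansion
    have hag : ⟪a, g⟫ = (1-τ) * (s1 + (1/τ) * s2) + τ * s1 := by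
      have hu : u = (x k - xstar) + (1/τ) • (x k - y k) := by
        rw [hudef, hzdef]; simp only; module
      rw [hadef, inner_add_left, real_inner_smul_left, real_inner_smul_left, hu,
        inner_add_left, real_inner_smul_left]
    -- norm expansion of ‖a‖²
    have hna : ‖a‖^2 ≤ (1-τ) * ‖u‖^2 + τ * ‖v‖^2 := by
      have hexp : ‖a‖^2 = (1-τ)^2 * ‖u‖^2 + 2 * ((1-τ)*τ*⟪u,v⟫) + τ^2 * ‖v‖^2 := by
        rw [hadef, norm_add_sq_real, real_inner_smul_left, real_inner_smul_right,
          norm_smul, norm_smul, Real.norm_eq_abs, Real.norm_eq_abs, mul_pow, mul_pow,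
          sq_abs, sq_abs]
        ring
      have huv : 2*⟪u,v⟫ ≤ ‖u‖^2 + ‖v‖^2 := by
        have h := norm_sub_sq_real u v
        have h2 : (0:ℝ) ≤ ‖u - v‖^2 := by positivity
        linarith
      have h1ττ : (0:ℝ) ≤ (1-τ)*τ := mul_nonneg (by linarith) hτpos.le
      nlinarith [mul_le_mul_of_nonneg_left huv h1ττ]
    -- potential identity
    have hE2 : μ/2 * ‖z (k+1) - xstar‖^2
        = μ/2 * ‖a‖^2 - (τ * s1 + (1-τ) * s2) + 1/(2*L) * ‖g‖^2 := by
      rw [ha, norm_sub_sq_real, real_inner_smul_right, norm_smul, Real.norm_eq_abs,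
        mul_pow, sq_abs, hag, hμeq]
      field_simp
      ring
    -- multiply (ii) and (iii) by nonnegative scalars
    have hE4 : τ * (-s1) ≤ τ * (f xstar - f (x k) - μ/2 * ‖x k - xstar‖^2) :=
      mul_le_mul_of_nonneg_left hii hτpos.le
    have hE5 : (1-τ) * (-s2) ≤ (1-τ) * (f (y k) - f (x k)) :=
      mul_le_mul_of_nonneg_left hiii (by linarith)
    have hE3 : μ/2 * ‖a‖^2 ≤ μ/2 * ((1-τ) * ‖u‖^2 + τ * ‖v‖^2) :=
      mul_le_mul_of_nonneg_left hna (by positivity)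
    -- combine
    have hgoal : Φ (k+1) = f (y (k+1)) - f xstar + μ/2 * ‖z (k+1) - xstar‖^2 := rfl
    have hΦk : Φ k = f (y k) - f xstar + μ/2 * ‖u‖^2 := rfl
    rw [hgoal, hΦk, hE2]
    have hvB : ‖v‖^2 = ‖x k - xstar‖^2 := by rw [hvdef]
    nlinarith [hi, hE3, hE4, hE5]
  -- induction
  have hΦle : ∀ k : ℕ, Φ k ≤ (1 - τ) ^ k * Φ 0 := by
    intro k
    induction k with
    | zero => simp
    | succ k ih =>
      calc Φ (k+1) ≤ (1-τ) * Φ k := hstep k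
        _ ≤ (1-τ) * ((1-τ)^k * Φ 0) := mul_le_mul_of_nonneg_left ih (by linarith)
        _ = (1-τ)^(k+1) * Φ 0 := by ring
  intro k
  have h1 : f (y k) - f xstar ≤ Φ k := by
    have : (0:ℝ) ≤ μ/2 * ‖z k - xstar‖^2 := by positivity
    simp only [hΦdef]; linarith
  calc f (y k) - f xstar ≤ Φ k := h1
    _ ≤ (1-τ)^k * Φ 0 := hΦle k
    _ = (1 - Real.sqrt (μ / L)) ^ k *
        (f (x 0) - f xstar + μ / 2 * ‖x 0 - xstar‖ ^ 2) := by rw [hΦ0]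
end

section
/- Let A and B be real symmetric positive definite n×n matrices and b ∈ ℝⁿ, and let x* be the unique solution of A x = b. Suppose 0 < μ ≤ L are real numbers such that A − μ·B⁻¹ and L·B⁻¹ − A are positive semidefinite (equivalently, all eigenvalues of BA lie in [μ, L]), and set β = (√L − √μ)/(√L + √μ) and κ = L/μ. Given x⁰ ∈ ℝⁿ, define sequences by y⁰ = x⁰ and, for k ≥ 1, yᵏ = xᵏ⁻¹ + (1/L)·B(b − A xᵏ⁻¹) and xᵏ = yᵏ + β(yᵏ − yᵏ⁻¹). Then for every k ≥ 0, ‖yᵏ − x*‖_A² ≤ 2·(1 − 1/√κ)ᵏ · ‖x⁰ − x*‖_A². -/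
open Matrix

set_option maxHeartbeats 1000000 in
/-- Nesterov acceleration applied to the preconditioned linear system `A x = b` with SPD
preconditioner `B`: A-norm convergence estimate for the gradient-step iterates `y k`. -/
theorem nesterov_preconditioned_linear_convergence
    (n : ℕ) (A B : Matrix (Fin n) (Fin n) ℝ) (hA : A.PosDef) (hB : B.PosDef)
    (b xstar : Fin n → ℝ) (hxstar : A *ᵥ xstar = b)
    (μ L : ℝ) (hμ : 0 < μ) (hμL : μ ≤ L)
    (h1 : (A - μ • B⁻¹).PosSemidef) (h2 : (L • B⁻¹ - A).PosSemidef)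
    (β κ : ℝ) (hβ : β = (Real.sqrt L - Real.sqrt μ) / (Real.sqrt L + Real.sqrt μ))
    (hκ : κ = L / μ)
    (x y : ℕ → Fin n → ℝ)
    (hy0 : y 0 = x 0)
    (hy : ∀ k : ℕ, y (k + 1) = x k + (1 / L) • (B *ᵥ (b - A *ᵥ x k)))
    (hx : ∀ k : ℕ, x (k + 1) = y (k + 1) + β • (y (k + 1) - y k)) :
    ∀ k : ℕ, (y k - xstar) ⬝ᵥ (A *ᵥ (y k - xstar)) ≤
      2 * (1 - 1 / Real.sqrt κ) ^ k * ((x 0 - xstar) ⬝ᵥ (A *ᵥ (x 0 - xstar))) := by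
  have hL : 0 < L := lt_of_lt_of_le hμ hμL
  have hLne : L ≠ 0 := ne_of_gt hL
  have hμne : μ ≠ 0 := ne_of_gt hμ
  -- the preconditioner inverse
  set C := B⁻¹ with hCdef
  have hCpd : C.PosDef := hB.inv
  have hAT : Aᵀ = A := by
    have := hA.isHermitian.eq; rwa [conjTranspose_eq_transpose_of_trivial] at this
  have hCT : Cᵀ = C := by
    have := hCpd.isHermitian.eq; rwa [conjTranspose_eq_transpose_of_trivial] at this
  have symmDP : ∀ (M : Matrix (Fin n) (Fin n) ℝ), Mᵀ = M → ∀ p r : Fin n → ℝ,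
      p ⬝ᵥ (M *ᵥ r) = r ⬝ᵥ (M *ᵥ p) := by
    intro M hM p r
    rw [dotProduct_mulVec, ← mulVec_transpose, hM, dotProduct_comm]
  have sA := symmDP A hAT
  have sC := symmDP C hCT
  have hCB : C * B = 1 := nonsing_inv_mul B (isUnit_iff_ne_zero.mpr hB.det_pos.ne')
  have cg : ∀ p v : Fin n → ℝ, p ⬝ᵥ (C *ᵥ (B *ᵥ v)) = p ⬝ᵥ v := by
    intro p v; rw [mulVec_mulVec, hCB, one_mulVec]
  have posA : ∀ v : Fin n → ℝ, 0 ≤ v ⬝ᵥ (A *ᵥ v) := fun v => by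
    simpa using hA.posSemidef.dotProduct_mulVec_nonneg v
  have posC : ∀ v : Fin n → ℝ, 0 ≤ v ⬝ᵥ (C *ᵥ v) := fun v => by
    simpa using hCpd.posSemidef.dotProduct_mulVec_nonneg v
  have lowA : ∀ v : Fin n → ℝ, μ * (v ⬝ᵥ (C *ᵥ v)) ≤ v ⬝ᵥ (A *ᵥ v) := by
    intro v
    have h := h1.dotProduct_mulVec_nonneg v
    simp only [star_trivial, sub_mulVec, smul_mulVec, dotProduct_sub, dotProduct_smul,
      smul_eq_mul] at h
    linarith
  have upA : ∀ v : Fin n → ℝ, v ⬝ᵥ (A *ᵥ v) ≤ L * (v ⬝ᵥ (C *ᵥ v)) := by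
    intro v
    have h := h2.dotProduct_mulVec_nonneg v
    simp only [star_trivial, sub_mulVec, smul_mulVec, dotProduct_sub, dotProduct_smul,
      smul_eq_mul] at h
    linarith
  -- expansion lemmas for quadratic forms
  have expand2 : ∀ (M : Matrix (Fin n) (Fin n) ℝ), Mᵀ = M → ∀ (a c : ℝ) (p r : Fin n → ℝ),
      (a • p + c • r) ⬝ᵥ (M *ᵥ (a • p + c • r)) =
        a ^ 2 * (p ⬝ᵥ (M *ᵥ p)) + 2 * (a * c) * (p ⬝ᵥ (M *ᵥ r)) + c ^ 2 * (r ⬝ᵥ (M *ᵥ r)) := by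
    intro M hM a c p r
    simp only [mulVec_add, mulVec_smul, dotProduct_add, add_dotProduct, dotProduct_smul,
      smul_dotProduct, smul_eq_mul]
    linear_combination (a * c) * symmDP M hM r p
  have expand3 : ∀ (M : Matrix (Fin n) (Fin n) ℝ), Mᵀ = M →
      ∀ (a c d : ℝ) (p r s : Fin n → ℝ),
      (a • p + c • r + d • s) ⬝ᵥ (M *ᵥ (a • p + c • r + d • s)) =
        a ^ 2 * (p ⬝ᵥ (M *ᵥ p)) + c ^ 2 * (r ⬝ᵥ (M *ᵥ r)) + d ^ 2 * (s ⬝ᵥ (M *ᵥ s))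
        + 2 * (a * c) * (p ⬝ᵥ (M *ᵥ r)) + 2 * (a * d) * (p ⬝ᵥ (M *ᵥ s))
        + 2 * (c * d) * (r ⬝ᵥ (M *ᵥ s)) := by
    intro M hM a c d p r s
    simp only [mulVec_add, mulVec_smul, dotProduct_add, add_dotProduct, dotProduct_smul,
      smul_dotProduct, smul_eq_mul]
    linear_combination (a * c) * symmDP M hM r p + (a * d) * symmDP M hM s p +
      (c * d) * symmDP M hM s r
  -- scalar constants
  have hsL : (0:ℝ) < Real.sqrt L := Real.sqrt_pos.mpr hL
  have hsμ : (0:ℝ) < Real.sqrt μ := Real.sqrt_pos.mpr hμ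
  have hsμL : Real.sqrt μ ≤ Real.sqrt L := Real.sqrt_le_sqrt hμL
  set q : ℝ := Real.sqrt μ / Real.sqrt L with hqdef
  have hq0 : 0 < q := div_pos hsμ hsL
  have hqne : q ≠ 0 := ne_of_gt hq0
  have hq1 : q ≤ 1 := (div_le_one hsL).mpr hsμL
  have h1q : (1:ℝ) + q ≠ 0 := by positivity
  have hμq : μ = q ^ 2 * L := by
    rw [hqdef, div_pow, Real.sq_sqrt hμ.le, Real.sq_sqrt hL.le]
    field_simp
  have hβq : β = (1 - q) / (1 + q) := by
    have hd : Real.sqrt L + Real.sqrt μ ≠ 0 := by positivity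
    rw [hβ, hqdef]
    rw [div_eq_div_iff hd (by positivity)]
    field_simp
  have hκq : 1 - 1 / Real.sqrt κ = 1 - q := by
    rw [hκ, Real.sqrt_div hL.le, one_div_div, hqdef]
  have hq1' : 0 ≤ 1 - q := by linarith
  clear_value q
  -- auxiliary sequence
  set z : ℕ → Fin n → ℝ := fun k =>
    Nat.rec (x 0) (fun j _ => (1 / q) • y (j + 1) - ((1 - q) / q) • y j) k with hzdef
  have hz0 : z 0 = x 0 := rfl
  have hzs : ∀ k, z (k + 1) = (1 / q) • y (k + 1) - ((1 - q) / q) • y k := fun k => rfl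
  clear_value z
  -- relation R1 : (1+q) • x k = y k + q • z k
  have hR1 : ∀ k, (1 + q) • x k = y k + q • z k := by
    intro k
    cases k with
    | zero =>
      rw [hz0, ← hy0]; module
    | succ j =>
      rw [hzs j, hx j, hβq]
      match_scalars <;> field_simp <;> ring
  -- relation F2
  have hF2 : ∀ k, z (k + 1) = (1 - q) • z k + q • x k + (q * L / μ) • (y (k + 1) - x k) := by
    intro k
    rw [hμq]
    cases k with
    | zero =>
      rw [hzs 0, hz0, ← hy0]
      match_scalars <;> field_simp <;> ring
    | succ j =>
      rw [hzs (j + 1), hzs j, hx j, hβq]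
      match_scalars <;> field_simp <;> ring
  -- the potential one-step estimate
  have step : ∀ k,
      (1/2) * ((y (k+1) - xstar) ⬝ᵥ (A *ᵥ (y (k+1) - xstar)))
        + (μ/2) * ((z (k+1) - xstar) ⬝ᵥ (C *ᵥ (z (k+1) - xstar)))
      ≤ (1 - q) * ((1/2) * ((y k - xstar) ⬝ᵥ (A *ᵥ (y k - xstar)))
        + (μ/2) * ((z k - xstar) ⬝ᵥ (C *ᵥ (z k - xstar)))) := by
    intro k
    set u : Fin n → ℝ := x k - xstar with hu
    set e : Fin n → ℝ := y k - xstar with he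
    set e' : Fin n → ℝ := y (k+1) - xstar with he'
    set w : Fin n → ℝ := z k - xstar with hw
    set w' : Fin n → ℝ := z (k+1) - xstar with hw'
    set g : Fin n → ℝ := B *ᵥ (A *ᵥ u) with hg
    clear_value u e e' w w' g
    -- vector identity V1
    have hbA : b - A *ᵥ (x k) = -(A *ᵥ u) := by
      rw [hu, mulVec_sub, ← hxstar]
      abel
    have hV1 : e' = u - (1 / L) • g := by
      rw [he', hy k, hbA, mulVec_neg, ← hg, hu]
      module
    have hyx : y (k+1) - x k = -((1 / L) • g) := by
      have h' : y (k+1) - x k = e' - u := by rw [he', hu]; abel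
      rw [h', hV1]; module
    have hV2 : w' = (1 - q) • w + q • u + (-(q / μ)) • g := by
      rw [hw', hF2 k, hyx, hw, hu, hμq]
      match_scalars <;> field_simp <;> ring
    -- rewrite e via R1
    have hyk : y k = (1 + q) • x k - q • z k := by
      rw [eq_sub_iff_add_eq, hR1 k]
    have heq : e = (1 + q) • u + (-q) • w := by
      rw [he, hw, hu, hyk]; module
    have hV1' : e' = (1:ℝ) • u + (-(1 / L)) • g := by rw [hV1]; module
    -- scalar abbreviations via expansions
    have hEA' := expand2 A hAT 1 (-(1 / L)) u g
    rw [← hV1'] at hEA'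
    have hEA := expand2 A hAT (1 + q) (-q) u w
    rw [← heq] at hEA
    have hWC' := expand3 C hCT (1 - q) q (-(q / μ)) w u g
    rw [← hV2] at hWC'
    have hPwu := expand2 C hCT 1 (-1) w u
    have hDuw := expand2 A hAT 1 (-1) u w
    -- identify C-products with A-products via C * B = 1
    have hGC : g ⬝ᵥ (C *ᵥ g) = g ⬝ᵥ (A *ᵥ u) := by
      conv_lhs => rw [hg]
      rw [cg, ← hg, sA g u]
    have hwg : w ⬝ᵥ (C *ᵥ g) = w ⬝ᵥ (A *ᵥ u) := by rw [hg, cg]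
    have hug : u ⬝ᵥ (C *ᵥ g) = u ⬝ᵥ (A *ᵥ u) := by rw [hg, cg]
    have hAug : u ⬝ᵥ (A *ᵥ g) = g ⬝ᵥ (A *ᵥ u) := sA u g
    rw [hwg, hug] at hWC'
    simp only [hGC] at hWC'
    rw [sA w u] at hWC'
    rw [hAug] at hEA'
    -- nonnegativity facts
    have n1 : 0 ≤ ((1:ℝ) • w + (-1:ℝ) • u) ⬝ᵥ (C *ᵥ ((1:ℝ) • w + (-1:ℝ) • u)) := posC _
    have n3 : 0 ≤ ((1:ℝ) • u + (-1:ℝ) • w) ⬝ᵥ (A *ᵥ ((1:ℝ) • u + (-1:ℝ) • w)) := posA _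
    rw [hPwu] at n1
    rw [hDuw] at n3
    have n2 : g ⬝ᵥ (A *ᵥ g) ≤ L * (g ⬝ᵥ (A *ᵥ u)) := by
      have h' := upA g
      rw [hGC] at h'
      exact h'
    have n4 : μ * (u ⬝ᵥ (C *ᵥ u)) ≤ u ⬝ᵥ (A *ᵥ u) := lowA u
    -- final algebraic identity + dropping nonnegative slacks
    have hid : (1/2) * (e' ⬝ᵥ (A *ᵥ e')) + (μ/2) * (w' ⬝ᵥ (C *ᵥ w')) =
        (1 - q) * ((1/2) * (e ⬝ᵥ (A *ᵥ e)) + (μ/2) * (w ⬝ᵥ (C *ᵥ w)))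
        - (μ * q * (1 - q) / 2) *
            ((w ⬝ᵥ (C *ᵥ w)) - 2 * (w ⬝ᵥ (C *ᵥ u)) + (u ⬝ᵥ (C *ᵥ u)))
        - (1 / (2 * L ^ 2)) * (L * (g ⬝ᵥ (A *ᵥ u)) - g ⬝ᵥ (A *ᵥ g))
        - ((1 - q) * q ^ 2 / 2) *
            ((u ⬝ᵥ (A *ᵥ u)) - 2 * (u ⬝ᵥ (A *ᵥ w)) + (w ⬝ᵥ (A *ᵥ w)))
        - (q / 2) * ((u ⬝ᵥ (A *ᵥ u)) - μ * (u ⬝ᵥ (C *ᵥ u))) := by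
      rw [hEA', hEA, hWC', hμq]
      field_simp
      ring
    have t1 : 0 ≤ (μ * q * (1 - q) / 2) *
        ((w ⬝ᵥ (C *ᵥ w)) - 2 * (w ⬝ᵥ (C *ᵥ u)) + (u ⬝ᵥ (C *ᵥ u))) := by
      apply mul_nonneg
      · positivity
      · linarith only [n1]
    have t2 : 0 ≤ (1 / (2 * L ^ 2)) * (L * (g ⬝ᵥ (A *ᵥ u)) - g ⬝ᵥ (A *ᵥ g)) := by
      apply mul_nonneg
      · positivity
      · linarith only [n2]
    have t3 : 0 ≤ ((1 - q) * q ^ 2 / 2) *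
        ((u ⬝ᵥ (A *ᵥ u)) - 2 * (u ⬝ᵥ (A *ᵥ w)) + (w ⬝ᵥ (A *ᵥ w))) := by
      apply mul_nonneg
      · positivity
      · linarith only [n3]
    have t4 : 0 ≤ (q / 2) * ((u ⬝ᵥ (A *ᵥ u)) - μ * (u ⬝ᵥ (C *ᵥ u))) := by
      apply mul_nonneg
      · positivity
      · linarith
    linarith only [hid, t1, t2, t3, t4]
  -- iterate the potential estimate
  have Φbound : ∀ k,
      (1/2) * ((y k - xstar) ⬝ᵥ (A *ᵥ (y k - xstar)))
        + (μ/2) * ((z k - xstar) ⬝ᵥ (C *ᵥ (z k - xstar)))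
      ≤ (1 - q) ^ k * ((1/2) * ((y 0 - xstar) ⬝ᵥ (A *ᵥ (y 0 - xstar)))
        + (μ/2) * ((z 0 - xstar) ⬝ᵥ (C *ᵥ (z 0 - xstar)))) := by
    intro k
    induction k with
    | zero => simp
    | succ j ih =>
      calc _ ≤ (1 - q) * ((1/2) * ((y j - xstar) ⬝ᵥ (A *ᵥ (y j - xstar)))
            + (μ/2) * ((z j - xstar) ⬝ᵥ (C *ᵥ (z j - xstar)))) := step j
        _ ≤ (1 - q) * ((1 - q) ^ j * ((1/2) * ((y 0 - xstar) ⬝ᵥ (A *ᵥ (y 0 - xstar)))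
            + (μ/2) * ((z 0 - xstar) ⬝ᵥ (C *ᵥ (z 0 - xstar))))) := by
          apply mul_le_mul_of_nonneg_left ih hq1'
        _ = (1 - q) ^ (j + 1) * _ := by ring
  -- initial potential bound and conclusion
  intro k
  rw [hκq]
  have h0 : (1/2) * ((y 0 - xstar) ⬝ᵥ (A *ᵥ (y 0 - xstar)))
      + (μ/2) * ((z 0 - xstar) ⬝ᵥ (C *ᵥ (z 0 - xstar)))
      ≤ (x 0 - xstar) ⬝ᵥ (A *ᵥ (x 0 - xstar)) := by
    rw [hy0, hz0]
    have := lowA (x 0 - xstar)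
    linarith
  have hk := Φbound k
  have hpow : (0:ℝ) ≤ (1 - q) ^ k := pow_nonneg hq1' k
  have hWk : 0 ≤ (μ/2) * ((z k - xstar) ⬝ᵥ (C *ᵥ (z k - xstar))) :=
    mul_nonneg (by positivity) (posC _)
  linarith only [hk, hWk, mul_le_mul_of_nonneg_left h0 hpow]
end

section
/- Let L > 0, 0 ≤ β < 1, and let x be a real number with 0 < x ≤ L. Then every real sequence (q_k)_{k≥0} satisfying the recurrence q_{k+1} = q_k + (1/L)(1 − x·q_k) + β(1 − x/L)(q_k − q_{k−1}) for all k ≥ 1 (with arbitrary initial values q₀, q₁) converges to 1/x as k → ∞. -/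
open Filter Complex

/-- Norm bound for a perturbed geometric recurrence. -/
lemma nesterov_aux_bound (ρ : ℝ) (hρ : 0 < ρ) (a b c : ℂ) (ha : ‖a‖ ≤ ρ) (hb : ‖b‖ ≤ ρ)
    (U : ℕ → ℂ) (hU : ∀ k, U (k + 1) = a * U k + b ^ k * c) :
    ∀ k, ‖U k‖ ≤ ρ ^ k * (‖U 0‖ + k * (‖c‖ / ρ)) := by
  intro k
  induction k with
  | zero => simp
  | succ n ih =>
    have h1 : ‖U (n + 1)‖ ≤ ‖a‖ * ‖U n‖ + ‖b‖ ^ n * ‖c‖ := by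
      rw [hU n]
      calc ‖a * U n + b ^ n * c‖ ≤ ‖a * U n‖ + ‖b ^ n * c‖ := norm_add_le _ _
        _ = ‖a‖ * ‖U n‖ + ‖b‖ ^ n * ‖c‖ := by rw [norm_mul, norm_mul, norm_pow]
    have hbn : ‖b‖ ^ n ≤ ρ ^ n := pow_le_pow_left₀ (norm_nonneg _) hb n
    have h2 : ‖a‖ * ‖U n‖ ≤ ρ * (ρ ^ n * (‖U 0‖ + n * (‖c‖ / ρ))) := by
      have := mul_le_mul ha ih (norm_nonneg _) hρ.le
      exact this
    have h3 : ‖b‖ ^ n * ‖c‖ ≤ ρ ^ n * ‖c‖ :=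
      mul_le_mul_of_nonneg_right hbn (norm_nonneg _)
    have : ‖U (n + 1)‖ ≤ ρ * (ρ ^ n * (‖U 0‖ + n * (‖c‖ / ρ))) + ρ ^ n * ‖c‖ := by
      linarith
    calc ‖U (n + 1)‖ ≤ ρ * (ρ ^ n * (‖U 0‖ + n * (‖c‖ / ρ))) + ρ ^ n * ‖c‖ := this
      _ = ρ ^ (n + 1) * (‖U 0‖ + (n + 1 : ℕ) * (‖c‖ / ρ)) := by
          field_simp
          push_cast
          ring

lemma nesterov_aux_tendsto (ρ : ℝ) (hρ0 : 0 < ρ) (hρ1 : ρ < 1) (a b c : ℂ)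
    (ha : ‖a‖ ≤ ρ) (hb : ‖b‖ ≤ ρ) (U : ℕ → ℂ)
    (hU : ∀ k, U (k + 1) = a * U k + b ^ k * c) :
    Tendsto U atTop (nhds 0) := by
  rw [tendsto_zero_iff_norm_tendsto_zero]
  apply squeeze_zero (fun n => norm_nonneg _)
    (nesterov_aux_bound ρ hρ0 a b c ha hb U hU)
  have h1 : Tendsto (fun k : ℕ => ρ ^ k * ‖U 0‖) atTop (nhds 0) := by
    simpa using (tendsto_pow_atTop_nhds_zero_of_lt_one hρ0.le hρ1).mul_const ‖U 0‖
  have h2 : Tendsto (fun k : ℕ => (k * ρ ^ k) * (‖c‖ / ρ)) atTop (nhds 0) := by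
    simpa using (tendsto_self_mul_const_pow_of_lt_one hρ0.le hρ1).mul_const (‖c‖ / ρ)
  have := h1.add h2
  simp only [add_zero] at this
  convert this using 2 with k
  ring

/-- Existence of (possibly complex) roots of the characteristic polynomial,
both of modulus `≤ ρ < 1`. -/
lemma nesterov_roots_exist (β r : ℝ) (hβ0 : 0 ≤ β) (hβ1 : β < 1)
    (hr0 : 0 ≤ r) (hr1 : r < 1) :
    ∃ (l₁ l₂ : ℂ) (ρ : ℝ), 0 < ρ ∧ ρ < 1 ∧
      l₁ + l₂ = (((1 + β) * r : ℝ) : ℂ) ∧ l₁ * l₂ = ((β * r : ℝ) : ℂ) ∧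
      ‖l₁‖ ≤ ρ ∧ ‖l₂‖ ≤ ρ := by
  set s : ℝ := (1 + β) * r with hs
  set p : ℝ := β * r with hp
  have hs0 : 0 ≤ s := by positivity
  have hp0 : 0 ≤ p := by positivity
  have hs2 : s < 2 := by nlinarith
  have hp1 : p < 1 := by nlinarith
  rcases le_or_gt (4 * p) (s ^ 2) with hD | hD
  · -- real roots
    set d : ℝ := Real.sqrt (s ^ 2 - 4 * p) with hd
    have hd0 : 0 ≤ d := Real.sqrt_nonneg _
    have hd2 : d ^ 2 = s ^ 2 - 4 * p := Real.sq_sqrt (by linarith)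
    have hds : d ≤ s := by nlinarith
    have hlt : s + d < 2 := by nlinarith
    refine ⟨(((s + d) / 2 : ℝ) : ℂ), (((s - d) / 2 : ℝ) : ℂ), max ((s + d) / 2) (1 / 2),
      ?_, ?_, ?_, ?_, ?_, ?_⟩
    · exact lt_max_of_lt_right (by norm_num)
    · rw [max_lt_iff]; constructor <;> linarith
    · push_cast; ring
    · rw [← Complex.ofReal_mul]
      norm_cast
      linear_combination (-(1 : ℝ) / 4) * hd2
    · rw [show ‖(((s + d) / 2 : ℝ) : ℂ)‖ = |(s + d) / 2| from by rw [Complex.norm_real, Real.norm_eq_abs],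
        _root_.abs_of_nonneg (show (0:ℝ) ≤ (s + d) / 2 by linarith)]
      exact le_max_left _ _
    · rw [show ‖(((s - d) / 2 : ℝ) : ℂ)‖ = |(s - d) / 2| from by rw [Complex.norm_real, Real.norm_eq_abs],
        _root_.abs_of_nonneg (show (0:ℝ) ≤ (s - d) / 2 by linarith)]
      exact le_trans (by linarith) (le_max_left ((s + d) / 2) (1 / 2))
  · -- complex conjugate roots
    set t : ℝ := Real.sqrt (4 * p - s ^ 2) with ht
    have ht0 : 0 ≤ t := Real.sqrt_nonneg _
    have ht2 : t ^ 2 = 4 * p - s ^ 2 := Real.sq_sqrt (by linarith)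
    set l₁ : ℂ := ((s / 2 : ℝ) : ℂ) + ((t / 2 : ℝ) : ℂ) * Complex.I with hl₁
    set l₂ : ℂ := ((s / 2 : ℝ) : ℂ) - ((t / 2 : ℝ) : ℂ) * Complex.I with hl₂
    have hkey : (s / 2) ^ 2 + (t / 2) ^ 2 = p := by linear_combination (1 / 4 : ℝ) * ht2
    have hsq1 : Complex.normSq l₁ = p := by
      simp [hl₁, Complex.normSq_apply]
      nlinarith [hkey]
    have hsq2 : Complex.normSq l₂ = p := by
      simp [hl₂, Complex.normSq_apply]
      nlinarith [hkey]
    refine ⟨l₁, l₂, max (Real.sqrt p) (1 / 2), ?_, ?_, ?_, ?_, ?_, ?_⟩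
    · exact lt_max_of_lt_right (by norm_num)
    · rw [max_lt_iff]
      refine ⟨?_, by norm_num⟩
      rw [show (1 : ℝ) = Real.sqrt 1 by simp]
      exact Real.sqrt_lt_sqrt hp0 hp1
    · rw [hl₁, hl₂]; push_cast; ring
    · rw [hl₁, hl₂]
      have hI : Complex.I ^ 2 = -1 := Complex.I_sq
      have : (((s / 2 : ℝ) : ℂ) + ((t / 2 : ℝ) : ℂ) * Complex.I) *
          (((s / 2 : ℝ) : ℂ) - ((t / 2 : ℝ) : ℂ) * Complex.I)
          = ((s / 2 : ℝ) : ℂ) ^ 2 + ((t / 2 : ℝ) : ℂ) ^ 2 := by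
        linear_combination (-(((t / 2 : ℝ) : ℂ)) ^ 2) * hI
      rw [this]
      norm_cast
    · rw [Complex.norm_def, hsq1]
      exact le_max_left _ _
    · rw [Complex.norm_def, hsq2]
      exact le_max_left _ _

/-- The scalar three-term recurrence associated with the Nesterov acceleration method,
evaluated at a point `x ∈ (0, L]`, converges to `1/x` for any initial values. -/
theorem nesterov_q_tendsto_inv
    (L β x : ℝ) (hL : 0 < L) (hβ0 : 0 ≤ β) (hβ1 : β < 1)
    (hx0 : 0 < x) (hxL : x ≤ L) (q : ℕ → ℝ)
    (hrec : ∀ k : ℕ, 1 ≤ k →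
      q (k + 1) = q k + (1 / L) * (1 - x * q k) + β * (1 - x / L) * (q k - q (k - 1))) :
    Filter.Tendsto q Filter.atTop (nhds (1 / x)) := by
  have hL' : L ≠ 0 := ne_of_gt hL
  set r : ℝ := 1 - x / L with hr
  have hr0 : 0 ≤ r := by
    have : x / L ≤ 1 := (div_le_one hL).mpr hxL
    rw [hr]; linarith
  have hr1 : r < 1 := by
    have : 0 < x / L := div_pos hx0 hL
    rw [hr]; linarith
  set u : ℕ → ℝ := fun k => 1 - x * q k with hu
  have hurec : ∀ k : ℕ, u (k + 2) = (1 + β) * r * u (k + 1) - β * r * u k := by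
    intro k
    have h := hrec (k + 1) (by omega)
    simp only [Nat.add_sub_cancel] at h
    rw [hr] at h
    simp only [hu, hr]
    linear_combination (-x) * h
  obtain ⟨l₁, l₂, ρ, hρ0, hρ1, hsum, hprod, hn1, hn2⟩ :=
    nesterov_roots_exist β r hβ0 hβ1 hr0 hr1
  set U : ℕ → ℂ := fun k => ((u (k + 1) : ℝ) : ℂ) with hU
  have hC : ∀ k : ℕ, U (k + 1) = (l₁ + l₂) * U k - l₁ * l₂ * ((u k : ℝ) : ℂ) := by
    intro k
    rw [hsum, hprod]
    simp only [hU]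
    push_cast [hurec k]
    ring
  set c : ℂ := U 1 - l₂ * U 0 with hc
  have hUrec : ∀ k : ℕ, U (k + 1) = l₂ * U k + l₁ ^ k * c := by
    intro k
    induction k with
    | zero => rw [hc]; ring
    | succ n ih =>
      have h := hC (n + 1)
      simp only [hU] at h ih ⊢
      linear_combination h + l₁ * ih
  have hUtend : Tendsto U atTop (nhds 0) :=
    nesterov_aux_tendsto ρ hρ0 hρ1 l₂ l₁ c hn2 hn1 U hUrec
  have hu1 : Tendsto (fun k => u (k + 1)) atTop (nhds 0) := by
    rw [tendsto_zero_iff_norm_tendsto_zero]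
    have := tendsto_zero_iff_norm_tendsto_zero.mp hUtend
    simpa [hU, Complex.norm_real] using this
  have hu0 : Tendsto u atTop (nhds 0) := by
    have := (tendsto_add_atTop_iff_nat 1).mp hu1
    exact this
  have hx' : x ≠ 0 := ne_of_gt hx0
  have hq : ∀ k, q k = (1 - u k) / x := by
    intro k
    simp only [hu]
    field_simp
    ring
  have : Tendsto (fun k => (1 - u k) / x) atTop (nhds ((1 - 0) / x)) :=
    (tendsto_const_nhds.sub hu0).div_const x
  simp only [sub_zero] at this
  exact Tendsto.congr (fun k => (hq k).symm) this
end

section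
/- Let 0 < μ ≤ L, set α = 4/(√L + √μ)² and β = ((√L − √μ)/(√L + √μ))², and let x be a real number with 0 < x ≤ L. Then every real sequence (q_k)_{k≥0} satisfying the recurrence q_{k+1} = q_k + α(1 − x·q_k) + β(q_k − q_{k−1}) for all k ≥ 1 (with arbitrary initial values q₀, q₁) converges to 1/x as k → ∞. -/
open Filter

/-- A second-order linear recurrence whose characteristic roots lie strictly inside the unit
disc tends to zero. -/
lemma linrec_tendsto_zero (t b r₁ r₂ : ℂ) (hsum : r₁ + r₂ = t) (hprod : r₁ * r₂ = b)
    (h1 : ‖r₁‖ < 1) (h2 : ‖r₂‖ < 1) (u : ℕ → ℂ)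
    (hrec : ∀ j : ℕ, u (j + 2) = t * u (j + 1) - b * u j) :
    Tendsto u atTop (nhds 0) := by
  set w : ℕ → ℂ := fun j => u (j + 1) - r₂ * u j with hw
  have hwrec : ∀ j, w (j + 1) = r₁ * w j := by
    intro j
    simp only [hw]
    rw [hrec j, ← hsum, ← hprod]
    ring
  have hwpow : ∀ j, w j = r₁ ^ j * w 0 := by
    intro j
    induction j with
    | zero => simp
    | succ j ih => rw [hwrec j, ih, pow_succ]; ring
  set σ : ℝ := max ‖r₁‖ (max ‖r₂‖ (1 / 2)) with hσ
  have hσ0 : 0 < σ := lt_of_lt_of_le (by norm_num) (le_trans (le_max_right _ _) (le_max_right _ _))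
  have hσ1 : σ < 1 := by
    simp only [hσ, max_lt_iff]
    exact ⟨h1, h2, by norm_num⟩
  have hσr1 : ‖r₁‖ ≤ σ := le_max_left _ _
  have hσr2 : ‖r₂‖ ≤ σ := le_trans (le_max_left _ _) (le_max_right _ _)
  set C : ℝ := ‖u 0‖ + ‖w 0‖ / σ with hC
  have hCw : ‖w 0‖ ≤ C * σ := by
    have h1 : ‖w 0‖ / σ * σ = ‖w 0‖ := div_mul_cancel₀ _ (ne_of_gt hσ0)
    have h2 : ‖w 0‖ / σ ≤ C := le_add_of_nonneg_left (norm_nonneg _)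
    calc ‖w 0‖ = ‖w 0‖ / σ * σ := h1.symm
      _ ≤ C * σ := mul_le_mul_of_nonneg_right h2 hσ0.le
  have hbound : ∀ j : ℕ, ‖u j‖ ≤ C * (j + 1) * σ ^ j := by
    intro j
    induction j with
    | zero =>
      simp only [pow_zero, Nat.cast_zero]
      have : (0 : ℝ) ≤ ‖w 0‖ / σ := div_nonneg (norm_nonneg _) hσ0.le
      simp only [hC]; linarith [norm_nonneg (u 0)]
    | succ j ih =>
      have hdecomp : u (j + 1) = r₂ * u j + w j := by simp only [hw]; ring
      have h1 : ‖u (j + 1)‖ ≤ ‖r₂‖ * ‖u j‖ + ‖w j‖ := by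
        rw [hdecomp]
        exact le_trans (norm_add_le _ _) (by rw [norm_mul])
      have h2 : ‖w j‖ ≤ σ ^ j * ‖w 0‖ := by
        rw [hwpow j, norm_mul, norm_pow]
        exact mul_le_mul_of_nonneg_right (pow_le_pow_left₀ (norm_nonneg _) hσr1 j) (norm_nonneg _)
      have h3 : ‖r₂‖ * ‖u j‖ ≤ σ * (C * (j + 1) * σ ^ j) := by
        apply mul_le_mul hσr2 ih (norm_nonneg _) hσ0.le
      have h4 : σ ^ j * ‖w 0‖ ≤ σ ^ j * (C * σ) :=
        mul_le_mul_of_nonneg_left hCw (pow_nonneg hσ0.le j)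
      calc ‖u (j + 1)‖ ≤ σ * (C * (j + 1) * σ ^ j) + σ ^ j * (C * σ) := by linarith
        _ = C * ((j : ℝ) + 1 + 1) * σ ^ (j + 1) := by ring
        _ = C * ((j + 1 : ℕ) + 1) * σ ^ (j + 1) := by push_cast; ring
  have htend : Tendsto (fun j : ℕ => C * (j + 1) * σ ^ j) atTop (nhds 0) := by
    have hσn : ‖σ‖ < 1 := by rwa [Real.norm_eq_abs, abs_of_pos hσ0]
    have hs1 : Tendsto (fun j : ℕ => (j : ℝ) ^ 1 * σ ^ j) atTop (nhds 0) :=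
      (summable_pow_mul_geometric_of_norm_lt_one 1 hσn).tendsto_atTop_zero
    have hs0 : Tendsto (fun j : ℕ => σ ^ j) atTop (nhds 0) :=
      tendsto_pow_atTop_nhds_zero_of_lt_one hσ0.le hσ1
    have := ((hs1.add hs0).const_mul C)
    simp only [mul_zero, add_zero] at this
    convert this using 2 with j
    ring
  exact squeeze_zero_norm hbound htend

set_option maxHeartbeats 1000000 in
/-- The scalar three-term recurrence associated with the heavy ball method with Polyak's
parameters, evaluated at a point `x ∈ (0, L]`, converges to `1/x` for any initial values. -/
theorem heavy_ball_q_tendsto_inv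
    (μ L x : ℝ) (hμ : 0 < μ) (hμL : μ ≤ L)
    (α β : ℝ)
    (hα : α = 4 / (Real.sqrt L + Real.sqrt μ) ^ 2)
    (hβ : β = ((Real.sqrt L - Real.sqrt μ) / (Real.sqrt L + Real.sqrt μ)) ^ 2)
    (hx0 : 0 < x) (hxL : x ≤ L) (q : ℕ → ℝ)
    (hrec : ∀ k : ℕ, 1 ≤ k →
      q (k + 1) = q k + α * (1 - x * q k) + β * (q k - q (k - 1))) :
    Filter.Tendsto q Filter.atTop (nhds (1 / x)) := by
  have hL : 0 < L := lt_of_lt_of_le hμ hμL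
  set m := Real.sqrt μ with hm
  set a := Real.sqrt L with ha'
  have hm0 : 0 < m := Real.sqrt_pos.mpr hμ
  have ha0 : 0 < a := Real.sqrt_pos.mpr hL
  have hma : m ≤ a := Real.sqrt_le_sqrt hμL
  have hm2 : m ^ 2 = μ := Real.sq_sqrt hμ.le
  have ha2 : a ^ 2 = L := Real.sq_sqrt hL.le
  have ham : 0 < (a + m) ^ 2 := by positivity
  -- basic facts about α, β
  have hβ0 : 0 ≤ β := by rw [hβ]; positivity
  have hβ1 : β < 1 := by
    rw [hβ, div_pow, div_lt_one ham]
    nlinarith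
  have hαx : 0 < α * x := by
    rw [hα]; positivity
  have hαx2 : α * x < 2 * (1 + β) := by
    have hxa : x ≤ a ^ 2 := by rw [ha2]; exact hxL
    rw [hα, hβ, div_pow, div_mul_eq_mul_div, div_lt_iff₀ ham, mul_comm]
    have h2 : 2 * (1 + (a - m) ^ 2 / (a + m) ^ 2) * (a + m) ^ 2
        = 2 * ((a + m) ^ 2 + (a - m) ^ 2) := by field_simp
    rw [h2]
    nlinarith
  set t : ℝ := 1 + β - α * x with ht
  have ht1 : t < 1 + β := by rw [ht]; linarith
  have ht2 : -(1 + β) < t := by rw [ht]; linarith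
  set D : ℝ := t ^ 2 - 4 * β with hD
  -- the residual sequence over ℂ
  set u : ℕ → ℂ := fun k => ((1 - x * q k : ℝ) : ℂ) with hu
  have hureal : ∀ j : ℕ, (1 - x * q (j + 2)) = t * (1 - x * q (j + 1)) - β * (1 - x * q j) := by
    intro j
    have h := hrec (j + 1) (Nat.le_add_left 1 j)
    simp only [Nat.add_sub_cancel] at h
    have : j + 1 + 1 = j + 2 := rfl
    rw [this] at h
    rw [h, ht]; ring
  have hurec : ∀ j : ℕ, u (j + 2) = (t : ℂ) * u (j + 1) - (β : ℂ) * u j := by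
    intro j
    simp only [hu]
    rw [← Complex.ofReal_mul, ← Complex.ofReal_mul, ← Complex.ofReal_sub, Complex.ofReal_inj]
    exact hureal j
  -- find roots with modulus < 1 and apply linrec_tendsto_zero
  have hu0 : Tendsto u atTop (nhds 0) := by
    rcases le_or_gt 0 D with hDpos | hDneg
    · -- real roots
      set s : ℝ := Real.sqrt D with hs
      have hs0 : 0 ≤ s := Real.sqrt_nonneg _
      have hs2 : s ^ 2 = D := Real.sq_sqrt hDpos
      have hsl1 : s < 2 - t := by
        rw [hs]
        refine (Real.sqrt_lt' (by linarith)).mpr ?_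
        rw [hD]; nlinarith
      have hsl2 : s < 2 + t := by
        rw [hs]
        refine (Real.sqrt_lt' (by linarith)).mpr ?_
        rw [hD]; nlinarith
      refine linrec_tendsto_zero (t : ℂ) (β : ℂ) (((t + s) / 2 : ℝ) : ℂ) (((t - s) / 2 : ℝ) : ℂ)
        ?_ ?_ ?_ ?_ u hurec
      · push_cast; ring
      · rw [← Complex.ofReal_mul, Complex.ofReal_inj]
        have : (t + s) / 2 * ((t - s) / 2) = (t ^ 2 - s ^ 2) / 4 := by ring
        rw [this, hs2, hD]; ring
      · rw [Complex.norm_real, Real.norm_eq_abs, abs_lt]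
        constructor <;> [linarith; linarith]
      · rw [Complex.norm_real, Real.norm_eq_abs, abs_lt]
        constructor <;> [linarith; linarith]
    · -- complex conjugate roots
      set s : ℝ := Real.sqrt (-D) with hs
      have hs2 : s ^ 2 = -D := Real.sq_sqrt (by linarith)
      have hs2' : s ^ 2 = 4 * β - t ^ 2 := by rw [hs2, hD]; ring
      have hmod : (t / 2) ^ 2 + (s / 2) ^ 2 = β := by linear_combination hs2' / 4
      refine linrec_tendsto_zero (t : ℂ) (β : ℂ)
        ((t / 2 : ℝ) + (s / 2 : ℝ) * Complex.I) ((t / 2 : ℝ) - (s / 2 : ℝ) * Complex.I)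
        ?_ ?_ ?_ ?_ u hurec
      · push_cast; ring
      · have : ((t / 2 : ℝ) + (s / 2 : ℝ) * Complex.I) * ((t / 2 : ℝ) - (s / 2 : ℝ) * Complex.I)
            = (((t / 2) ^ 2 + (s / 2) ^ 2 : ℝ) : ℂ) := by
          push_cast
          linear_combination (-(((s : ℂ) / 2) ^ 2)) * Complex.I_sq
        rw [this, hmod]
      · have hn : ‖(t / 2 : ℝ) + (s / 2 : ℝ) * Complex.I‖ ^ 2 = β := by
          rw [← hmod, Complex.sq_norm, Complex.normSq_add_mul_I]
        nlinarith [norm_nonneg ((t / 2 : ℝ) + (s / 2 : ℝ) * Complex.I)]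
      · have hrw : (t / 2 : ℝ) - (s / 2 : ℝ) * Complex.I
            = ((t / 2 : ℝ) : ℂ) + ((-(s / 2) : ℝ) : ℂ) * Complex.I := by push_cast; ring
        have hn : ‖(t / 2 : ℝ) - (s / 2 : ℝ) * Complex.I‖ ^ 2 = β := by
          rw [hrw, Complex.sq_norm, Complex.normSq_add_mul_I]
          rw [← hmod]; ring
        exact (pow_lt_one_iff_of_nonneg (norm_nonneg _) two_ne_zero).mp
          (by rw [hn]; exact hβ1)
  -- conclude
  have hre : Tendsto (fun k => 1 - x * q k) atTop (nhds 0) := by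
    have h := (Complex.continuous_re.tendsto (0 : ℂ)).comp hu0
    have heq2 : (Complex.re ∘ u) = fun k => 1 - x * q k := by
      funext k
      simp only [Function.comp_apply, hu, Complex.ofReal_re]
    rw [heq2] at h
    simpa using h
  have hq : Tendsto (fun k => (1 - (1 - x * q k)) / x) atTop (nhds ((1 - 0) / x)) :=
    (tendsto_const_nhds.sub hre).div_const x
  have heq : (fun k => (1 - (1 - x * q k)) / x) = q := by
    funext k
    field_simp
    ring
  rw [heq] at hq
  simpa using hq
end

section
/- Let A and B be real symmetric positive definite n×n matrices, b ∈ ℝⁿ, and let x* be the unique solution of A x = b. Suppose 0 < μ ≤ L are real numbers such that A − μ·B⁻¹ and L·B⁻¹ − A are positive semidefinite (equivalently, all eigenvalues of BA lie in [μ, L]). Set α = 4/(√L + √μ)² and β = ((√L − √μ)/(√L + √μ))². Let x⁰, x¹ ∈ ℝⁿ be arbitrary and define xᵏ⁺¹ = xᵏ + α·B(b − A xᵏ) + β(xᵏ − xᵏ⁻¹) for k ≥ 1. Then for every ε > 0 there is a constant C such that ‖xᵏ − x*‖ ≤ C·((√L − √μ)/(√L + √μ) + ε)ᵏ for all k; in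 particular, xᵏ converges to x*, with asymptotic rate at most (√κ − 1)/(√κ + 1) where κ = L/μ. -/
open Matrix

private lemma dot_symm {n : ℕ} {M : Matrix (Fin n) (Fin n) ℝ} (hM : Mᵀ = M)
    (u v : Fin n → ℝ) : u ⬝ᵥ (M *ᵥ v) = v ⬝ᵥ (M *ᵥ u) := by
  rw [Matrix.dotProduct_mulVec, ← Matrix.mulVec_transpose, hM, dotProduct_comm]

private lemma psd_symm {n : ℕ} {M : Matrix (Fin n) (Fin n) ℝ} (hM : M.PosSemidef) :
    Mᵀ = M := by
  have := hM.1
  rwa [Matrix.IsHermitian, Matrix.conjTranspose_eq_transpose_of_trivial] at this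

private lemma psd_nonneg {n : ℕ} {M : Matrix (Fin n) (Fin n) ℝ} (hM : M.PosSemidef)
    (u : Fin n → ℝ) : 0 ≤ u ⬝ᵥ (M *ᵥ u) := by
  simpa using hM.dotProduct_mulVec_nonneg u

private lemma cs_psd {n : ℕ} {M : Matrix (Fin n) (Fin n) ℝ} (hM : M.PosSemidef)
    (u v : Fin n → ℝ) :
    (u ⬝ᵥ (M *ᵥ v)) ^ 2 ≤ (u ⬝ᵥ (M *ᵥ u)) * (v ⬝ᵥ (M *ᵥ v)) := by
  have hs := psd_symm hM
  have hq : ∀ t : ℝ, 0 ≤ (v ⬝ᵥ (M *ᵥ v)) * (t * t) + (2 * (u ⬝ᵥ (M *ᵥ v))) * t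
      + (u ⬝ᵥ (M *ᵥ u)) := by
    intro t
    have h0 := psd_nonneg hM (u + t • v)
    have hsym : v ⬝ᵥ (M *ᵥ u) = u ⬝ᵥ (M *ᵥ v) := dot_symm hs v u
    simp only [Matrix.mulVec_add, Matrix.mulVec_smul, dotProduct_add, add_dotProduct,
      smul_dotProduct, dotProduct_smul, smul_eq_mul] at h0
    rw [hsym] at h0
    nlinarith [h0]
  have hd := discrim_le_zero hq
  rw [discrim] at hd
  nlinarith [hd]

private lemma sqrt_form_triangle {n : ℕ} {M : Matrix (Fin n) (Fin n) ℝ} (hM : M.PosSemidef)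
    (u v : Fin n → ℝ) :
    Real.sqrt ((u + v) ⬝ᵥ (M *ᵥ (u + v))) ≤
      Real.sqrt (u ⬝ᵥ (M *ᵥ u)) + Real.sqrt (v ⬝ᵥ (M *ᵥ v)) := by
  have hs := psd_symm hM
  have ha := psd_nonneg hM u
  have hb := psd_nonneg hM v
  have hcs := cs_psd hM u v
  have hc : u ⬝ᵥ (M *ᵥ v) ≤ Real.sqrt (u ⬝ᵥ (M *ᵥ u)) * Real.sqrt (v ⬝ᵥ (M *ᵥ v)) := by
    rw [← Real.sqrt_mul ha]
    calc u ⬝ᵥ (M *ᵥ v) ≤ |u ⬝ᵥ (M *ᵥ v)| := le_abs_self _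
    _ = Real.sqrt ((u ⬝ᵥ (M *ᵥ v)) ^ 2) := (Real.sqrt_sq_eq_abs _).symm
    _ ≤ Real.sqrt ((u ⬝ᵥ (M *ᵥ u)) * (v ⬝ᵥ (M *ᵥ v))) := Real.sqrt_le_sqrt hcs
  have hexp : (u + v) ⬝ᵥ (M *ᵥ (u + v)) =
      u ⬝ᵥ (M *ᵥ u) + 2 * (u ⬝ᵥ (M *ᵥ v)) + v ⬝ᵥ (M *ᵥ v) := by
    have hsym : v ⬝ᵥ (M *ᵥ u) = u ⬝ᵥ (M *ᵥ v) := dot_symm hs v u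
    simp only [Matrix.mulVec_add, dotProduct_add, add_dotProduct]
    rw [hsym]; ring
  rw [hexp]
  have h2 : u ⬝ᵥ (M *ᵥ u) + 2 * (u ⬝ᵥ (M *ᵥ v)) + v ⬝ᵥ (M *ᵥ v) ≤
      (Real.sqrt (u ⬝ᵥ (M *ᵥ u)) + Real.sqrt (v ⬝ᵥ (M *ᵥ v))) ^ 2 := by
    have h3 : Real.sqrt (u ⬝ᵥ (M *ᵥ u)) ^ 2 = u ⬝ᵥ (M *ᵥ u) := Real.sq_sqrt ha
    have h4 : Real.sqrt (v ⬝ᵥ (M *ᵥ v)) ^ 2 = v ⬝ᵥ (M *ᵥ v) := Real.sq_sqrt hb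
    nlinarith [hc]
  calc Real.sqrt (u ⬝ᵥ (M *ᵥ u) + 2 * (u ⬝ᵥ (M *ᵥ v)) + v ⬝ᵥ (M *ᵥ v))
      ≤ Real.sqrt ((Real.sqrt (u ⬝ᵥ (M *ᵥ u)) + Real.sqrt (v ⬝ᵥ (M *ᵥ v))) ^ 2) :=
        Real.sqrt_le_sqrt h2
    _ = Real.sqrt (u ⬝ᵥ (M *ᵥ u)) + Real.sqrt (v ⬝ᵥ (M *ᵥ v)) := by
        rw [Real.sqrt_sq (by positivity)]

private lemma dot_self_nonneg {n : ℕ} (u : Fin n → ℝ) : 0 ≤ u ⬝ᵥ u :=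
  Finset.sum_nonneg fun i _ => mul_self_nonneg (u i)

private lemma sq_le_dot_self {n : ℕ} (u : Fin n → ℝ) (i : Fin n) : u i ^ 2 ≤ u ⬝ᵥ u := by
  have : u i * u i ≤ ∑ j, u j * u j :=
    Finset.single_le_sum (f := fun j => u j * u j)
      (fun j _ => mul_self_nonneg (u j)) (Finset.mem_univ i)
  simpa [dotProduct, sq] using this

private lemma form_le {n : ℕ} (M : Matrix (Fin n) (Fin n) ℝ) (u : Fin n → ℝ) :
    u ⬝ᵥ (M *ᵥ u) ≤ (∑ i, ∑ j, |M i j|) * (u ⬝ᵥ u) := by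
  have hterm : ∀ i j : Fin n, u i * (M i j * u j) ≤ |M i j| * (u ⬝ᵥ u) := by
    intro i j
    have hi := sq_le_dot_self u i
    have hj := sq_le_dot_self u j
    have h1 : u i * (M i j * u j) ≤ |M i j| * (|u i| * |u j|) := by
      calc u i * (M i j * u j) ≤ |u i * (M i j * u j)| := le_abs_self _
      _ = |M i j| * (|u i| * |u j|) := by rw [abs_mul, abs_mul]; ring
    have h2 : |u i| * |u j| ≤ u ⬝ᵥ u := by
      nlinarith [sq_abs (u i), sq_abs (u j), sq_nonneg (|u i| - |u j|)]
    calc u i * (M i j * u j) ≤ |M i j| * (|u i| * |u j|) := h1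
    _ ≤ |M i j| * (u ⬝ᵥ u) := mul_le_mul_of_nonneg_left h2 (abs_nonneg _)
  calc u ⬝ᵥ (M *ᵥ u) = ∑ i, ∑ j, u i * (M i j * u j) := by
        simp [dotProduct, Matrix.mulVec, Finset.mul_sum]
  _ ≤ ∑ i, ∑ j, |M i j| * (u ⬝ᵥ u) :=
      Finset.sum_le_sum fun i _ => Finset.sum_le_sum fun j _ => hterm i j
  _ = (∑ i, ∑ j, |M i j|) * (u ⬝ᵥ u) := by rw [Finset.sum_mul]; congr 1; ext i; rw [Finset.sum_mul]

private lemma bern_bound {r s : ℝ} (hr : 0 ≤ r) (hrs : r < s) :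
    ∃ C : ℝ, 0 ≤ C ∧ ∀ j : ℕ, ((j : ℝ) + 1) * r ^ j ≤ C * s ^ j := by
  have hs : 0 < s := lt_of_le_of_lt hr hrs
  rcases eq_or_lt_of_le hr with h0 | h0
  · refine ⟨1, zero_le_one, fun j => ?_⟩
    cases j with
    | zero => simp
    | succ j => simp [← h0, zero_pow]; positivity
  · set t : ℝ := (s - r) / r with ht
    have htpos : 0 < t := div_pos (by linarith) h0
    set m : ℝ := min 1 t with hm
    have hmpos : 0 < m := lt_min one_pos htpos
    refine ⟨1 / m, by positivity, fun j => ?_⟩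
    have hber : 1 + (j : ℝ) * t ≤ (1 + t) ^ j := one_add_mul_le_pow (by linarith) j
    have hjm : ((j : ℝ) + 1) * m ≤ 1 + (j : ℝ) * t := by
      rcases le_total t 1 with hle | hle
      · have : m = t := min_eq_right hle
        rw [this]
        have : (0:ℝ) ≤ j := Nat.cast_nonneg j
        nlinarith
      · have : m = 1 := min_eq_left hle
        rw [this]
        have : (0:ℝ) ≤ j := Nat.cast_nonneg j
        nlinarith
    have hst : (1 + t) * r = s := by rw [ht, add_mul, div_mul_cancel₀ _ h0.ne']; ring
    have hkey : ((j : ℝ) + 1) * m * r ^ j ≤ s ^ j := by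
      calc ((j : ℝ) + 1) * m * r ^ j ≤ (1 + t) ^ j * r ^ j := by
            apply mul_le_mul_of_nonneg_right _ (pow_nonneg hr j)
            exact le_trans hjm hber
      _ = ((1 + t) * r) ^ j := (mul_pow _ _ _).symm
      _ = s ^ j := by rw [hst]
    rw [div_mul_eq_mul_div, le_div_iff₀ hmpos]
    linarith [hkey]

set_option maxHeartbeats 1000000 in

/-- Heavy ball method with Polyak's parameters applied to the preconditioned SPD linear
system `A x = b`: for every `ε > 0` the Euclidean norm of the error decays like
`((√L - √μ)/(√L + √μ) + ε)^k`; in particular the iterates converge to the solution. -/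
theorem heavy_ball_preconditioned_linear_convergence
    (n : ℕ) (A B : Matrix (Fin n) (Fin n) ℝ) (hA : A.PosDef) (hB : B.PosDef)
    (b xstar : Fin n → ℝ) (hxstar : A *ᵥ xstar = b)
    (μ L : ℝ) (hμ : 0 < μ) (hμL : μ ≤ L)
    (h1 : (A - μ • B⁻¹).PosSemidef) (h2 : (L • B⁻¹ - A).PosSemidef)
    (α β : ℝ)
    (hα : α = 4 / (Real.sqrt L + Real.sqrt μ) ^ 2)
    (hβ : β = ((Real.sqrt L - Real.sqrt μ) / (Real.sqrt L + Real.sqrt μ)) ^ 2)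
    (x : ℕ → Fin n → ℝ)
    (hrec : ∀ k : ℕ, 1 ≤ k →
      x (k + 1) = x k + α • (B *ᵥ (b - A *ᵥ x k)) + β • (x k - x (k - 1))) :
    (∀ ε > (0 : ℝ), ∃ C : ℝ, ∀ k : ℕ,
        Real.sqrt ((x k - xstar) ⬝ᵥ (x k - xstar)) ≤
          C * ((Real.sqrt L - Real.sqrt μ) / (Real.sqrt L + Real.sqrt μ) + ε) ^ k) ∧
      Filter.Tendsto x Filter.atTop (nhds xstar) := by
  -- scalar setup
  set sL := Real.sqrt L with hsL_def
  set sm := Real.sqrt μ with hsm_def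
  have hL0 : 0 < L := lt_of_lt_of_le hμ hμL
  have hsm0 : 0 < sm := Real.sqrt_pos.mpr hμ
  have hsL0 : 0 < sL := Real.sqrt_pos.mpr hL0
  have hsLm : sm ≤ sL := Real.sqrt_le_sqrt hμL
  have hsL2 : sL ^ 2 = L := Real.sq_sqrt hL0.le
  have hsm2 : sm ^ 2 = μ := Real.sq_sqrt hμ.le
  have hd0 : 0 < sL + sm := by linarith
  have hdne : sL + sm ≠ 0 := hd0.ne'
  set ρ := (sL - sm) / (sL + sm) with hρ_def
  have hρ0 : 0 ≤ ρ := div_nonneg (by linarith) hd0.le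
  have hρ1 : ρ < 1 := by rw [hρ_def, div_lt_one hd0]; linarith
  have hβρ : β = ρ ^ 2 := hβ
  have hβ0 : 0 ≤ β := by rw [hβρ]; positivity
  have id1 : (1 + β) ^ 2 = 4 * β + α ^ 2 * L * μ := by
    rw [hβρ, hα, hρ_def, ← hsL2, ← hsm2]; field_simp; ring
  have id2 : 2 * α * (1 + β) = α ^ 2 * (L + μ) := by
    rw [hβρ, hα, hρ_def, ← hsL2, ← hsm2]; field_simp; ring
  -- matrix setup
  have hBsymm : Bᵀ = B := psd_symm hB.posSemidef
  have hAsymm : Aᵀ = A := psd_symm hA.posSemidef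
  have hBdet : IsUnit B.det := (Matrix.isUnit_iff_isUnit_det B).mp hB.isUnit
  have hBBi : B * B⁻¹ = 1 := Matrix.mul_nonsing_inv B hBdet
  have hBiB : B⁻¹ * B = 1 := Matrix.nonsing_inv_mul B hBdet
  have hBinv : (B⁻¹).PosDef := hB.inv
  have hBisymm : (B⁻¹)ᵀ = B⁻¹ := psd_symm hBinv.posSemidef
  have ipsymm : ∀ u v : Fin n → ℝ, u ⬝ᵥ (B⁻¹ *ᵥ v) = v ⬝ᵥ (B⁻¹ *ᵥ u) := dot_symm hBisymm
  have hip0 : ∀ u : Fin n → ℝ, 0 ≤ u ⬝ᵥ (B⁻¹ *ᵥ u) := psd_nonneg hBinv.posSemidef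
  have hTB : ∀ u : Fin n → ℝ, B⁻¹ *ᵥ ((B * A) *ᵥ u) = A *ᵥ u := by
    intro u
    rw [Matrix.mulVec_mulVec, ← Matrix.mul_assoc, hBiB, Matrix.one_mul]
  have hcross2 : ∀ u v : Fin n → ℝ, u ⬝ᵥ (B⁻¹ *ᵥ ((B * A) *ᵥ v)) = u ⬝ᵥ (A *ᵥ v) := by
    intro u v; rw [hTB]
  have hcross : ∀ u v : Fin n → ℝ, ((B * A) *ᵥ u) ⬝ᵥ (B⁻¹ *ᵥ v) = u ⬝ᵥ (A *ᵥ v) := by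
    intro u v
    rw [ipsymm ((B * A) *ᵥ u) v, hTB, dot_symm hAsymm v u]
  -- the error sequence
  set e : ℕ → Fin n → ℝ := fun k => x k - xstar with he_def
  have herec : ∀ j : ℕ, e (j + 1 + 1) =
      ((1 + β) • e (j + 1) - α • ((B * A) *ᵥ e (j + 1))) - β • e j := by
    intro j
    have h := hrec (j + 1) (Nat.le_add_left 1 j)
    simp only [Nat.add_sub_cancel] at h
    simp only [he_def]
    rw [h]
    have hb : b - A *ᵥ x (j + 1) = A *ᵥ (xstar - x (j + 1)) := by
      rw [Matrix.mulVec_sub, hxstar]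
    rw [hb, Matrix.mulVec_mulVec]
    have h2 : (B * A) *ᵥ (xstar - x (j + 1)) = ((B * A) *ᵥ xstar) - ((B * A) *ᵥ x (j + 1)) :=
      Matrix.mulVec_sub _ _ _
    rw [h2]
    have h3 : (B * A) *ᵥ (x (j + 1) - xstar) = ((B * A) *ᵥ x (j + 1)) - ((B * A) *ᵥ xstar) :=
      Matrix.mulVec_sub _ _ _
    rw [h3]
    module
  -- the key spectral inequality
  have key : ∀ u : Fin n → ℝ,
      ((1 + β) • u - α • ((B * A) *ᵥ u)) ⬝ᵥ (B⁻¹ *ᵥ ((1 + β) • u - α • ((B * A) *ᵥ u)))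
        ≤ 4 * β * (u ⬝ᵥ (B⁻¹ *ᵥ u)) := by
    intro u
    have hexp : ((1 + β) • u - α • ((B * A) *ᵥ u)) ⬝ᵥ
        (B⁻¹ *ᵥ ((1 + β) • u - α • ((B * A) *ᵥ u)))
        = (1 + β) ^ 2 * (u ⬝ᵥ (B⁻¹ *ᵥ u)) - 2 * α * (1 + β) * (u ⬝ᵥ (A *ᵥ u))
          + α ^ 2 * (((B * A) *ᵥ u) ⬝ᵥ (A *ᵥ u)) := by
      simp only [Matrix.mulVec_sub, Matrix.mulVec_smul, dotProduct_sub, sub_dotProduct,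
        smul_dotProduct, dotProduct_smul, smul_eq_mul]
      rw [hcross2 u u, hcross u u]
      have h4 : ((B * A) *ᵥ u) ⬝ᵥ (B⁻¹ *ᵥ ((B * A) *ᵥ u)) = ((B * A) *ᵥ u) ⬝ᵥ (A *ᵥ u) := by
        rw [hTB]
      rw [h4]
      ring
    rw [hexp]
    -- Cauchy-Schwarz part
    set w : Fin n → ℝ := (A - μ • B⁻¹) *ᵥ u with hw_def
    have hw2 : w = A *ᵥ u - μ • (B⁻¹ *ᵥ u) := by
      rw [hw_def, Matrix.sub_mulVec, Matrix.smul_mulVec]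
    have hm0 : 0 ≤ w ⬝ᵥ (B *ᵥ w) := psd_nonneg hB.posSemidef w
    have hp0 : 0 ≤ u ⬝ᵥ w := by
      have := psd_nonneg h1 u; rwa [← hw_def] at this
    have hPsymm : (A - μ • B⁻¹)ᵀ = A - μ • B⁻¹ := psd_symm h1
    have claim1 : u ⬝ᵥ ((A - μ • B⁻¹) *ᵥ (B *ᵥ w)) = w ⬝ᵥ (B *ᵥ w) := by
      rw [dot_symm hPsymm u (B *ᵥ w), ← hw_def, dotProduct_comm]
    have hBiBw : B⁻¹ *ᵥ (B *ᵥ w) = w := by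
      rw [Matrix.mulVec_mulVec, hBiB, Matrix.one_mulVec]
    have claim3 : (B *ᵥ w) ⬝ᵥ (B⁻¹ *ᵥ (B *ᵥ w)) = w ⬝ᵥ (B *ᵥ w) := by
      rw [hBiBw, dotProduct_comm]
    have claim2 : (B *ᵥ w) ⬝ᵥ ((A - μ • B⁻¹) *ᵥ (B *ᵥ w)) ≤ (L - μ) * (w ⬝ᵥ (B *ᵥ w)) := by
      have hq := psd_nonneg h2 (B *ᵥ w)
      have hid : (L • B⁻¹ - A : Matrix (Fin n) (Fin n) ℝ)
          = (L - μ) • B⁻¹ - (A - μ • B⁻¹) := by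
        rw [sub_smul]; abel
      rw [hid, Matrix.sub_mulVec, Matrix.smul_mulVec, dotProduct_sub,
        dotProduct_smul, smul_eq_mul, claim3] at hq
      linarith
    have hcs := cs_psd h1 u (B *ᵥ w)
    rw [claim1, ← hw_def] at hcs
    have hmle : w ⬝ᵥ (B *ᵥ w) ≤ (L - μ) * (u ⬝ᵥ w) := by
      rcases eq_or_lt_of_le hm0 with h | h
      · have h5 : 0 ≤ (L - μ) * (u ⬝ᵥ w) := mul_nonneg (by linarith) hp0
        linarith
      · nlinarith [hcs, mul_le_mul_of_nonneg_left claim2 hp0, h]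
    -- expand m and p
    have hmx : w ⬝ᵥ (B *ᵥ w) = ((B * A) *ᵥ u) ⬝ᵥ (A *ᵥ u) - 2 * μ * (u ⬝ᵥ (A *ᵥ u))
        + μ ^ 2 * (u ⬝ᵥ (B⁻¹ *ᵥ u)) := by
      rw [hw2]
      have t1 : B *ᵥ (B⁻¹ *ᵥ u) = u := by
        rw [Matrix.mulVec_mulVec, hBBi, Matrix.one_mulVec]
      simp only [Matrix.mulVec_sub, Matrix.mulVec_smul, dotProduct_sub, sub_dotProduct,
        dotProduct_smul, smul_dotProduct, smul_eq_mul, t1]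
      have t2 : (B⁻¹ *ᵥ u) ⬝ᵥ (B *ᵥ (A *ᵥ u)) = (A *ᵥ u) ⬝ᵥ u := by
        rw [dot_symm hBsymm (B⁻¹ *ᵥ u) (A *ᵥ u), t1]
      have t3 : (A *ᵥ u) ⬝ᵥ (B *ᵥ (A *ᵥ u)) = ((B * A) *ᵥ u) ⬝ᵥ (A *ᵥ u) := by
        rw [← Matrix.mulVec_mulVec, dotProduct_comm]
      have t4 : (A *ᵥ u) ⬝ᵥ u = u ⬝ᵥ (A *ᵥ u) := dotProduct_comm _ _
      have t5 : (B⁻¹ *ᵥ u) ⬝ᵥ u = u ⬝ᵥ (B⁻¹ *ᵥ u) := dotProduct_comm _ _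
      rw [t2, t3, t4, t5]
      ring
    have hpx : u ⬝ᵥ w = u ⬝ᵥ (A *ᵥ u) - μ * (u ⬝ᵥ (B⁻¹ *ᵥ u)) := by
      rw [hw2]
      simp only [dotProduct_sub, dotProduct_smul, smul_eq_mul]
    have hc2 : ((B * A) *ᵥ u) ⬝ᵥ (A *ᵥ u) + L * μ * (u ⬝ᵥ (B⁻¹ *ᵥ u))
        ≤ (L + μ) * (u ⬝ᵥ (A *ᵥ u)) := by
      rw [hmx, hpx] at hmle
      linarith [hmle]
    have e1 : (1 + β) ^ 2 * (u ⬝ᵥ (B⁻¹ *ᵥ u))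
        = (4 * β + α ^ 2 * L * μ) * (u ⬝ᵥ (B⁻¹ *ᵥ u)) := by rw [id1]
    have e2 : 2 * α * (1 + β) * (u ⬝ᵥ (A *ᵥ u))
        = α ^ 2 * (L + μ) * (u ⬝ᵥ (A *ᵥ u)) := by rw [id2]
    have e3 := mul_le_mul_of_nonneg_left hc2 (sq_nonneg α)
    linarith [e1, e2, e3]
  -- the Lyapunov quantity
  set Qq : ℕ → ℝ := fun k =>
    (e (k + 1)) ⬝ᵥ (B⁻¹ *ᵥ (e (k + 1)))
      - (((1 + β) • e k - α • ((B * A) *ᵥ e k)) ⬝ᵥ (B⁻¹ *ᵥ (e (k + 1))))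
      + β * ((e k) ⬝ᵥ (B⁻¹ *ᵥ (e k))) with hQq_def
  have hQrec : ∀ j : ℕ, Qq (j + 1) = β * Qq j := by
    intro j
    simp only [hQq_def]
    rw [herec j]
    simp only [Matrix.mulVec_sub, Matrix.mulVec_smul, dotProduct_sub, sub_dotProduct,
      smul_dotProduct, dotProduct_smul, smul_eq_mul]
    rw [hcross2 (e j) (e (j + 1)), hcross (e j) (e (j + 1))]
    rw [ipsymm (e j) (e (j + 1))]
    ring
  have hQpow : ∀ k : ℕ, Qq k = β ^ k * Qq 0 := by
    intro k
    induction k with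
    | zero => simp
    | succ j ih => rw [hQrec j, ih]; ring
  have hQdec : ∀ k : ℕ,
      (e (k + 1) - (1 / 2 : ℝ) • ((1 + β) • e k - α • ((B * A) *ᵥ e k))) ⬝ᵥ
        (B⁻¹ *ᵥ (e (k + 1) - (1 / 2 : ℝ) • ((1 + β) • e k - α • ((B * A) *ᵥ e k)))) ≤ Qq k := by
    intro k
    have hk := key (e k)
    simp only [hQq_def]
    simp only [Matrix.mulVec_sub, Matrix.mulVec_smul, dotProduct_sub, sub_dotProduct,
      smul_dotProduct, dotProduct_smul, smul_eq_mul] at hk ⊢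
    rw [hcross2 (e k) (e k), hcross (e k) (e k)] at hk
    rw [ipsymm (e (k + 1)) (e k), hcross2 (e (k + 1)) (e k), hcross (e k) (e (k + 1)),
      dot_symm hAsymm (e (k + 1)) (e k), hcross2 (e k) (e k), hcross (e k) (e k)]
    linarith [hk]
  have hQ0 : ∀ k : ℕ, 0 ≤ Qq k := fun k =>
    le_trans (psd_nonneg hBinv.posSemidef _) (hQdec k)
  -- the B⁻¹-norm of the error
  set Nn : ℕ → ℝ := fun k => Real.sqrt ((e k) ⬝ᵥ (B⁻¹ *ᵥ (e k))) with hN_def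
  have hq0 : 0 ≤ Qq 0 := hQ0 0
  have hstep : ∀ k : ℕ, Nn (k + 1) ≤ ρ * Nn k + ρ ^ k * Real.sqrt (Qq 0) := by
    intro k
    set s : Fin n → ℝ := (1 + β) • e k - α • ((B * A) *ᵥ e k) with hs_def
    set d : Fin n → ℝ := e (k + 1) - (1 / 2 : ℝ) • s with hd_def
    have hsplit : e (k + 1) = (1 / 2 : ℝ) • s + d := by rw [hd_def]; module
    have htri := sqrt_form_triangle hBinv.posSemidef ((1 / 2 : ℝ) • s) d
    have hfirst : Real.sqrt (((1 / 2 : ℝ) • s) ⬝ᵥ (B⁻¹ *ᵥ ((1 / 2 : ℝ) • s))) ≤ ρ * Nn k := by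
      have h14 : ((1 / 2 : ℝ) • s) ⬝ᵥ (B⁻¹ *ᵥ ((1 / 2 : ℝ) • s))
          = (1 / 4) * (s ⬝ᵥ (B⁻¹ *ᵥ s)) := by
        simp only [smul_dotProduct, Matrix.mulVec_smul, dotProduct_smul, smul_eq_mul]
        ring
      have hks : s ⬝ᵥ (B⁻¹ *ᵥ s) ≤ 4 * β * ((e k) ⬝ᵥ (B⁻¹ *ᵥ (e k))) := key (e k)
      have h15 : ((1 / 2 : ℝ) • s) ⬝ᵥ (B⁻¹ *ᵥ ((1 / 2 : ℝ) • s))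
          ≤ ρ ^ 2 * ((e k) ⬝ᵥ (B⁻¹ *ᵥ (e k))) := by
        rw [h14]; rw [hβρ] at hks; linarith
      calc Real.sqrt (((1 / 2 : ℝ) • s) ⬝ᵥ (B⁻¹ *ᵥ ((1 / 2 : ℝ) • s)))
          ≤ Real.sqrt (ρ ^ 2 * ((e k) ⬝ᵥ (B⁻¹ *ᵥ (e k)))) := Real.sqrt_le_sqrt h15
        _ = ρ * Nn k := by
            rw [Real.sqrt_mul (sq_nonneg ρ), Real.sqrt_sq hρ0, hN_def]
    have hsecond : Real.sqrt (d ⬝ᵥ (B⁻¹ *ᵥ d)) ≤ ρ ^ k * Real.sqrt (Qq 0) := by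
      have h16 : d ⬝ᵥ (B⁻¹ *ᵥ d) ≤ Qq k := hQdec k
      have h17 : Qq k = (ρ ^ k) ^ 2 * Qq 0 := by
        rw [hQpow k, hβρ, ← pow_mul, ← pow_mul, mul_comm 2 k]
      calc Real.sqrt (d ⬝ᵥ (B⁻¹ *ᵥ d)) ≤ Real.sqrt ((ρ ^ k) ^ 2 * Qq 0) := by
            rw [← h17]; exact Real.sqrt_le_sqrt h16
        _ = ρ ^ k * Real.sqrt (Qq 0) := by
            rw [Real.sqrt_mul (sq_nonneg _), Real.sqrt_sq (pow_nonneg hρ0 k)]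
    have hNN : Nn (k + 1) = Real.sqrt (((1 / 2 : ℝ) • s + d) ⬝ᵥ (B⁻¹ *ᵥ ((1 / 2 : ℝ) • s + d))) := by
      rw [hN_def, ← hsplit]
    rw [hNN]
    calc Real.sqrt (((1 / 2 : ℝ) • s + d) ⬝ᵥ (B⁻¹ *ᵥ ((1 / 2 : ℝ) • s + d)))
        ≤ Real.sqrt (((1 / 2 : ℝ) • s) ⬝ᵥ (B⁻¹ *ᵥ ((1 / 2 : ℝ) • s)))
          + Real.sqrt (d ⬝ᵥ (B⁻¹ *ᵥ d)) := htri
      _ ≤ ρ * Nn k + ρ ^ k * Real.sqrt (Qq 0) := add_le_add hfirst hsecond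
  have hNbound : ∀ k : ℕ, Nn k ≤ ρ ^ k * Nn 0 + (k : ℝ) * ρ ^ (k - 1) * Real.sqrt (Qq 0) := by
    intro k
    induction k with
    | zero => simp
    | succ k ih =>
      have h1 := hstep k
      have h2 : ρ * Nn k ≤ ρ * (ρ ^ k * Nn 0 + (k : ℝ) * ρ ^ (k - 1) * Real.sqrt (Qq 0)) :=
        mul_le_mul_of_nonneg_left ih hρ0
      have h3 : ρ * (ρ ^ k * Nn 0 + (k : ℝ) * ρ ^ (k - 1) * Real.sqrt (Qq 0))
          = ρ ^ (k + 1) * Nn 0 + (k : ℝ) * ρ ^ k * Real.sqrt (Qq 0) := by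
        cases k with
        | zero => simp
        | succ j => simp only [Nat.add_sub_cancel]; push_cast; ring
      rw [h3] at h2
      have h4 : Nn (k + 1) ≤ ρ ^ (k + 1) * Nn 0 + ((k : ℝ) + 1) * ρ ^ k * Real.sqrt (Qq 0) := by
        linarith
      simpa [Nat.add_sub_cancel] using h4
  -- comparison between Euclidean and B⁻¹ norms
  have hcomp : ∀ u : Fin n → ℝ,
      u ⬝ᵥ u ≤ (∑ i, ∑ j, |B i j|) * (u ⬝ᵥ (B⁻¹ *ᵥ u)) := by
    intro u
    have hw : B *ᵥ (B⁻¹ *ᵥ u) = u := by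
      rw [Matrix.mulVec_mulVec, hBBi, Matrix.one_mulVec]
    have hcs := cs_psd hB.posSemidef u (B⁻¹ *ᵥ u)
    rw [hw] at hcs
    have h5 : (B⁻¹ *ᵥ u) ⬝ᵥ u = u ⬝ᵥ (B⁻¹ *ᵥ u) := dotProduct_comm _ _
    rw [h5] at hcs
    have h6 := form_le B u
    have h7 := dot_self_nonneg u
    have h8 := hip0 u
    have h9 : 0 ≤ (∑ i, ∑ j, |B i j|) := by positivity
    rcases eq_or_lt_of_le h7 with h | h
    · rw [← h]; exact mul_nonneg h9 h8
    · nlinarith [hcs, mul_le_mul_of_nonneg_right h6 h8, h]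
  have hsqc : 0 ≤ (∑ i, ∑ j, |B i j|) := by positivity
  -- part 1
  have main : ∀ ε > (0 : ℝ), ∃ C : ℝ, ∀ k : ℕ,
      Real.sqrt ((x k - xstar) ⬝ᵥ (x k - xstar)) ≤ C * (ρ + ε) ^ k := by
    intro ε hε
    obtain ⟨C₁, hC₁0, hC₁⟩ := bern_bound hρ0 (show ρ < ρ + ε by linarith)
    have hs0 : 0 < ρ + ε := by linarith
    refine ⟨Real.sqrt (∑ i, ∑ j, |B i j|) * (Nn 0 + (C₁ / (ρ + ε)) * Real.sqrt (Qq 0)),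
      fun k => ?_⟩
    have e1 : Real.sqrt ((x k - xstar) ⬝ᵥ (x k - xstar))
        ≤ Real.sqrt (∑ i, ∑ j, |B i j|) * Nn k := by
      calc Real.sqrt ((x k - xstar) ⬝ᵥ (x k - xstar))
          = Real.sqrt ((e k) ⬝ᵥ (e k)) := rfl
        _ ≤ Real.sqrt ((∑ i, ∑ j, |B i j|) * ((e k) ⬝ᵥ (B⁻¹ *ᵥ (e k)))) :=
            Real.sqrt_le_sqrt (hcomp (e k))
        _ = Real.sqrt (∑ i, ∑ j, |B i j|) * Nn k := by
            rw [Real.sqrt_mul hsqc, hN_def]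
    have e2 := hNbound k
    have e3 : ρ ^ k ≤ (ρ + ε) ^ k := pow_le_pow_left₀ hρ0 (by linarith) k
    have e4 : (k : ℝ) * ρ ^ (k - 1) ≤ (C₁ / (ρ + ε)) * (ρ + ε) ^ k := by
      cases k with
      | zero => simpa using by positivity
      | succ j =>
        have h5 := hC₁ j
        have h6 : (C₁ / (ρ + ε)) * (ρ + ε) ^ (j + 1) = C₁ * (ρ + ε) ^ j := by
          field_simp
          ring
        simp only [Nat.add_sub_cancel, h6]
        push_cast
        linarith [h5]
    have hN0 : 0 ≤ Nn 0 := Real.sqrt_nonneg _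
    have hq : 0 ≤ Real.sqrt (Qq 0) := Real.sqrt_nonneg _
    have hsc : 0 ≤ Real.sqrt (∑ i, ∑ j, |B i j|) := Real.sqrt_nonneg _
    calc Real.sqrt ((x k - xstar) ⬝ᵥ (x k - xstar))
        ≤ Real.sqrt (∑ i, ∑ j, |B i j|) * Nn k := e1
      _ ≤ Real.sqrt (∑ i, ∑ j, |B i j|)
          * ((ρ + ε) ^ k * Nn 0 + (C₁ / (ρ + ε)) * (ρ + ε) ^ k * Real.sqrt (Qq 0)) := by
          apply mul_le_mul_of_nonneg_left _ hsc
          have f1 : ρ ^ k * Nn 0 ≤ (ρ + ε) ^ k * Nn 0 :=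
            mul_le_mul_of_nonneg_right e3 hN0
          have f2 : (k : ℝ) * ρ ^ (k - 1) * Real.sqrt (Qq 0)
              ≤ (C₁ / (ρ + ε)) * (ρ + ε) ^ k * Real.sqrt (Qq 0) :=
            mul_le_mul_of_nonneg_right e4 hq
          linarith
      _ = Real.sqrt (∑ i, ∑ j, |B i j|) * (Nn 0 + (C₁ / (ρ + ε)) * Real.sqrt (Qq 0))
          * (ρ + ε) ^ k := by ring
  refine ⟨main, ?_⟩
  -- part 2 : convergence
  obtain ⟨C, hC⟩ := main ((1 - ρ) / 2) (by linarith)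
  have hs1 : ρ + (1 - ρ) / 2 < 1 := by linarith
  have hs0' : 0 ≤ ρ + (1 - ρ) / 2 := by linarith
  rw [tendsto_pi_nhds]
  intro i
  rw [tendsto_iff_dist_tendsto_zero]
  have hb2 : ∀ k : ℕ, dist (x k i) (xstar i) ≤ C * (ρ + (1 - ρ) / 2) ^ k := by
    intro k
    have h1 := hC k
    have h3 := sq_le_dot_self (x k - xstar) i
    have h2 : |x k i - xstar i| ≤ Real.sqrt ((x k - xstar) ⬝ᵥ (x k - xstar)) := by
      rw [← Real.sqrt_sq_eq_abs]
      exact Real.sqrt_le_sqrt (by simpa using h3)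
    rw [Real.dist_eq]
    linarith
  have hlim : Filter.Tendsto (fun k : ℕ => C * (ρ + (1 - ρ) / 2) ^ k)
      Filter.atTop (nhds 0) := by
    have := tendsto_pow_atTop_nhds_zero_of_lt_one hs0' hs1
    simpa using this.const_mul C
  exact squeeze_zero (fun k => dist_nonneg) hb2 hlim
end

section
/- Let 0 < μ ≤ λ ≤ L and set β = (√L − √μ)/(√L + √μ). Define real sequences (a_k) and (b_k) by a₀ = 1, b₀ = 1, and for k ≥ 1: b_k = (1 − λ/L)·a_{k−1} and a_k = (1 + β)·b_k − β·b_{k−1}. Then for every k ≥ 0, b_k² ≤ 2·(1 − √(μ/L))ᵏ. -/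
lemma nesterov_step (t q X Y Z : ℝ) (ht0 : 0 < t) (ht1 : t ≤ 1) (hq0 : 0 ≤ q)
    (hq1 : q ≤ 1 - t^2) (hZ : (1+t)*Z = q*(2*Y - (1-t)*X)) :
    (1-q)*Z^2 + (t*Y + Z - Y)^2 ≤ (1-t)*((1-q)*Y^2 + (t*X + Y - X)^2) := by
  have hu : (0:ℝ) < 1 + t := by linarith
  have hkey : (1+t)^2 * ((1-t)*((1-q)*Y^2+(t*X+Y-X)^2) - ((1-q)*Z^2+(t*Y+Z-Y)^2))
      = q*(1-q)^2*(2*Y-(1-t)*X)^2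
        + (1-t)*(1-q-t^2)*((1+t)*Y-(2*Y-(1-t)*X))^2
        + t*(1-q-t^2)*(2*Y-(1-t)*X)^2
        + t*(1-t^2)*((1+t)*(t*X+Y-X)-t*(2*Y-(1-t)*X))^2 := by
    linear_combination (-((1-q)*((1+t)*Z + q*(2*Y-(1-t)*X))
      + (2*(t^2-1)*Y + (1+t)*Z + q*(2*Y-(1-t)*X)))) * hZ
  have hcert : 0 ≤ (1+t)^2 * ((1-t)*((1-q)*Y^2+(t*X+Y-X)^2) - ((1-q)*Z^2+(t*Y+Z-Y)^2)) := by
    rw [hkey]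
    have h1 : 0 ≤ q*(1-q)^2*(2*Y-(1-t)*X)^2 :=
      mul_nonneg (mul_nonneg hq0 (sq_nonneg _)) (sq_nonneg _)
    have h2 : 0 ≤ (1-t)*(1-q-t^2)*((1+t)*Y-(2*Y-(1-t)*X))^2 :=
      mul_nonneg (mul_nonneg (by linarith) (by linarith)) (sq_nonneg _)
    have h3 : 0 ≤ t*(1-q-t^2)*(2*Y-(1-t)*X)^2 :=
      mul_nonneg (mul_nonneg ht0.le (by linarith)) (sq_nonneg _)
    have h4 : 0 ≤ t*(1-t^2)*((1+t)*(t*X+Y-X)-t*(2*Y-(1-t)*X))^2 :=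
      mul_nonneg (mul_nonneg ht0.le (by nlinarith)) (sq_nonneg _)
    linarith
  nlinarith [hcert, mul_pos hu hu]

/-- Scalar error factors of Nesterov's constant-momentum method applied to the quadratic
`f(t) = (λ/2) t²` with `0 < μ ≤ λ ≤ L`, started from `x⁰ = y⁰ = 1`: the gradient-step
errors satisfy `b k ^ 2 ≤ 2 (1 - √(μ/L))^k`. -/
theorem nesterov_scalar_error_bound
    (μ lam L : ℝ) (hμ : 0 < μ) (hμlam : μ ≤ lam) (hlamL : lam ≤ L)
    (β : ℝ) (hβ : β = (Real.sqrt L - Real.sqrt μ) / (Real.sqrt L + Real.sqrt μ))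
    (a b : ℕ → ℝ) (ha0 : a 0 = 1) (hb0 : b 0 = 1)
    (hb : ∀ k : ℕ, b (k + 1) = (1 - lam / L) * a k)
    (ha : ∀ k : ℕ, a (k + 1) = (1 + β) * b (k + 1) - β * b k) :
    ∀ k : ℕ, (b k) ^ 2 ≤ 2 * (1 - Real.sqrt (μ / L)) ^ k := by
  have hL : 0 < L := lt_of_lt_of_le hμ (hμlam.trans hlamL)
  set t : ℝ := Real.sqrt (μ / L) with htdef
  have hμL : 0 < μ / L := div_pos hμ hL
  have ht0 : 0 < t := Real.sqrt_pos.2 hμL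
  have ht2 : t^2 = μ / L := Real.sq_sqrt hμL.le
  have hμL1 : μ / L ≤ 1 := (div_le_one hL).2 (hμlam.trans hlamL)
  have ht1 : t ≤ 1 := by nlinarith
  set q : ℝ := 1 - lam / L with hqdef
  have hq0 : 0 ≤ q := by
    have : lam / L ≤ 1 := (div_le_one hL).2 hlamL
    rw [hqdef]; linarith
  have hq1 : q ≤ 1 - t^2 := by
    have : μ / L ≤ lam / L := (div_le_div_iff_of_pos_right hL).2 hμlam
    rw [hqdef, ht2]; linarith
  -- β = (1-t)/(1+t)
  have hsL : 0 < Real.sqrt L := Real.sqrt_pos.2 hL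
  have hsμ : 0 < Real.sqrt μ := Real.sqrt_pos.2 hμ
  have htq : t = Real.sqrt μ / Real.sqrt L := by
    rw [htdef, Real.sqrt_div hμ.le]
  have hβt : β = (1 - t)/(1 + t) := by
    rw [hβ, htq]
    have h1 : Real.sqrt L + Real.sqrt μ ≠ 0 := by positivity
    field_simp
  have hut : (0:ℝ) < 1 + t := by linarith
  -- the key recurrence in cleared-denominator form
  have hZ : ∀ k : ℕ, (1+t) * b (k+2) = q * (2 * b (k+1) - (1-t) * b k) := by
    intro k
    rw [hb (k+1), ha k, hβt]
    have hc : (1+t) * ((1-t)/(1+t)) = 1 - t := by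
      field_simp
    linear_combination (q * (b (k+1) - b k)) * hc
  -- Lyapunov invariant
  have inv : ∀ k : ℕ,
      (1-q) * (b (k+1))^2 + (t * b k + b (k+1) - b k)^2 ≤ ((1-q) + t^2) * (1-t)^(k+1) := by
    intro k
    induction k with
    | zero =>
      have hZ0 : (1+t) * b 1 = q * (2 * b 0 - (1-t) * 1) := by
        rw [hb 0, ha0, hb0]; ring
      have h := nesterov_step t q 1 (b 0) (b 1) ht0 ht1 hq0 hq1 hZ0
      have he : ((1-q) + t^2) * (1-t)^(0+1) = (1-t) * ((1-q) * (1:ℝ)^2 + (t*1 + 1 - 1)^2) := by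
        ring
      show (1-q) * (b 1)^2 + (t * b 0 + b 1 - b 0)^2 ≤ ((1-q) + t^2) * (1-t)^(0+1)
      rw [hb0] at h ⊢
      linarith [h, he]
    | succ n ih =>
      have hstep := nesterov_step t q (b n) (b (n+1)) (b (n+2)) ht0 ht1 hq0 hq1 (hZ n)
      have h1t : (0:ℝ) ≤ 1 - t := by linarith
      have h3 := mul_le_mul_of_nonneg_left ih h1t
      have h2 : (1-t) * (((1-q) + t^2) * (1-t)^(n+1)) = ((1-q) + t^2) * (1-t)^(n+1+1) := by
        ring
      show (1-q) * (b (n+2))^2 + (t * b (n+1) + b (n+2) - b (n+1))^2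
          ≤ ((1-q) + t^2) * (1-t)^(n+1+1)
      linarith [hstep, h3, h2]
  -- conclude
  intro k
  match k with
  | 0 => rw [hb0]; norm_num
  | (n+1) =>
    have h := inv n
    have hsq : 0 ≤ (t * b n + b (n+1) - b n)^2 := sq_nonneg _
    have hp : 0 ≤ (1-t)^(n+1) := pow_nonneg (by linarith) _
    have h5 : (1-q) * (b (n+1))^2 ≤ ((1-q) + t^2) * (1-t)^(n+1) := by linarith
    have hq1' : t^2 ≤ 1 - q := by linarith
    have h6 : 0 ≤ (1 - q - t^2) * (1-t)^(n+1) := mul_nonneg (by linarith) hp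
    have h7 : (1-q) * (b (n+1))^2 ≤ (1-q) * (2 * (1-t)^(n+1)) := by nlinarith
    have h1qpos : (0:ℝ) < 1 - q := by nlinarith
    exact le_of_mul_le_mul_left h7 h1qpos
end

section
/- For every real number κ ≥ 1 there exist a real number δ with 0 ≤ δ < 1 and a natural number k ≥ 1 such that 2(1 − √(1 − δ))ᵏ < 1 and (1 − δ)·κ + κ · (1 − δ)·√(2(1 − √(1 − δ))ᵏ) / (1 − √(2(1 − √(1 − δ))ᵏ)) ≤ 1. -/
/-- Existence of admissible parameters `δ ∈ [0,1)` and `k ≥ 1` in the uniform convergence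
theorem for the Nesterov-accelerated multigrid cycle (N-cycle), for any two-grid condition
number `κ ≥ 1`. -/
theorem ncycle_admissible_parameters_exist
    (κ : ℝ) (hκ : 1 ≤ κ) :
    ∃ (δ : ℝ) (k : ℕ), 0 ≤ δ ∧ δ < 1 ∧ 1 ≤ k ∧
      2 * (1 - Real.sqrt (1 - δ)) ^ k < 1 ∧
      (1 - δ) * κ +
          κ * (1 - δ) * Real.sqrt (2 * (1 - Real.sqrt (1 - δ)) ^ k) /
            (1 - Real.sqrt (2 * (1 - Real.sqrt (1 - δ)) ^ k)) ≤ 1 := by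
  have hκ0 : (0:ℝ) < κ := lt_of_lt_of_le one_pos hκ
  have h1δ : 1 - (1 - 1/(2*κ)) = 1/(2*κ) := by ring
  have hpos : (0:ℝ) < 1/(2*κ) := by positivity
  have hle : 1/(2*κ) ≤ 1 := by
    rw [div_le_one (by linarith)]; linarith
  set s : ℝ := Real.sqrt (1/(2*κ)) with hs
  have hs0 : 0 < s := Real.sqrt_pos.mpr hpos
  have hs1 : s ≤ 1 := Real.sqrt_le_one.mpr hle
  set b : ℝ := 1 - s with hb
  have hb0 : 0 ≤ b := by simp [hb]; linarith
  have hb1 : b < 1 := by simp [hb]; linarith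
  obtain ⟨k, hk⟩ := exists_pow_lt_of_lt_one (show (0:ℝ) < 1/8 by norm_num) hb1
  refine ⟨1 - 1/(2*κ), max k 1, by linarith, by linarith, le_max_right _ _, ?_, ?_⟩ <;>
    rw [h1δ]
  · have : b ^ max k 1 ≤ b ^ k := pow_le_pow_of_le_one hb0 hb1.le (le_max_left k 1)
    show 2 * b ^ max k 1 < 1
    nlinarith
  · have hbk : b ^ max k 1 ≤ b ^ k := pow_le_pow_of_le_one hb0 hb1.le (le_max_left k 1)
    set t : ℝ := 2 * b ^ max k 1 with ht
    have ht0 : 0 ≤ t := by positivity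
    have ht14 : t ≤ 1/4 := by rw [ht]; nlinarith
    have hsq : Real.sqrt t ≤ 1/2 := by
      have h14 : Real.sqrt (1/4 : ℝ) = 1/2 := by
        rw [show (1/4:ℝ) = (1/2)^2 by norm_num, Real.sqrt_sq (by norm_num)]
      calc Real.sqrt t ≤ Real.sqrt (1/4) := Real.sqrt_le_sqrt ht14
        _ = 1/2 := h14
    have hsq0 : 0 ≤ Real.sqrt t := Real.sqrt_nonneg t
    have hden : (0:ℝ) < 1 - Real.sqrt t := by linarith
    have hdiv : Real.sqrt t / (1 - Real.sqrt t) ≤ 1 := by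
      rw [div_le_one hden]; linarith
    show 1/(2*κ) * κ + κ * (1/(2*κ)) * Real.sqrt t / (1 - Real.sqrt t) ≤ 1
    have e1 : 1/(2*κ) * κ = 1/2 := by field_simp
    have e2 : κ * (1/(2*κ)) * Real.sqrt t / (1 - Real.sqrt t)
        = (1/2) * (Real.sqrt t / (1 - Real.sqrt t)) := by
      field_simp
    rw [e1, e2]; linarith
end

section
/- Let A and B be real symmetric positive definite n×n matrices, let 0 < m ≤ 1, and suppose every real eigenvalue of BA lies in the interval [m, 1]. Let p ∈ ℝ[X] and ρ ∈ [0, 1) satisfy 0 ≤ p(x) ≤ ρ for all x ∈ [m, 1]. Define the matrix B̂ := (I − p(BA))·A⁻¹. Then every real eigenvalue of B̂A lies in the interval [1 − ρ, 1]. -/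
open Matrix Polynomial

lemma aeval_units_conj' {A : Type*} [Ring A] [Algebra ℝ A] (u : Aˣ) (x : A)
    (p : Polynomial ℝ) :
    aeval ((u : A) * x * (↑u⁻¹ : A)) p = (u : A) * aeval x p * (↑u⁻¹ : A) := by
  induction p using Polynomial.induction_on' with
  | add p q hp hq => simp [hp, hq, mul_add, add_mul]
  | monomial k a =>
      rw [aeval_monomial, aeval_monomial, Units.conj_pow, ← mul_assoc, ← mul_assoc,
        Algebra.commutes a (↑u : A), mul_assoc (↑u : A)]

/-- Eigenvalue localization for the polynomially accelerated coarse-level solver: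
if every real eigenvalue of `B * A` lies in `[m, 1]` and `0 ≤ p ≤ ρ < 1` on `[m, 1]`,
then every real eigenvalue of `B̂ * A`, where `B̂ = (I - p(BA)) A⁻¹`, lies in `[1-ρ, 1]`. -/
theorem accelerated_coarse_solver_spectrum
    (n : ℕ) (A B : Matrix (Fin n) (Fin n) ℝ) (hA : A.PosDef) (hB : B.PosDef)
    (m : ℝ) (hm0 : 0 < m) (hm1 : m ≤ 1)
    (hspec : ∀ t ∈ spectrum ℝ (B * A), t ∈ Set.Icc m 1)
    (p : Polynomial ℝ) (ρ : ℝ) (hρ0 : 0 ≤ ρ) (hρ1 : ρ < 1)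
    (hp : ∀ t ∈ Set.Icc m 1, 0 ≤ p.eval t ∧ p.eval t ≤ ρ)
    (Bhat : Matrix (Fin n) (Fin n) ℝ)
    (hBhat : Bhat = (1 - aeval (B * A) p) * A⁻¹) :
    ∀ t ∈ spectrum ℝ (Bhat * A), t ∈ Set.Icc (1 - ρ) 1 := by
  -- A is invertible
  have hAdet : IsUnit A.det := isUnit_iff_ne_zero.mpr hA.det_pos.ne'
  -- Bhat * A = aeval (B*A) (1 - p)
  have hBA : Bhat * A = aeval (B * A) (1 - p) := by
    rw [hBhat, mul_assoc, Matrix.nonsing_inv_mul A hAdet, mul_one]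
    simp [map_sub]
  -- square root of B
  open scoped MatrixOrder in
  set S : Matrix (Fin n) (Fin n) ℝ := CFC.sqrt B with hSdef
  open scoped MatrixOrder in
  have hSS : S * S = B := CFC.sqrt_mul_sqrt_self B hB.posSemidef.nonneg
  open scoped MatrixOrder in
  have hSherm : S.IsHermitian := (CFC.sqrt_nonneg B).posSemidef.1
  have hSdet : IsUnit S.det := by
    have : S.det * S.det = B.det := by rw [← det_mul, hSS]
    refine isUnit_iff_ne_zero.mpr fun h => ?_
    exact hB.det_pos.ne' (by rw [← this, h, zero_mul])
  set u : (Matrix (Fin n) (Fin n) ℝ)ˣ := Matrix.nonsingInvUnit S hSdet with hu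
  have hucoe : (u : Matrix (Fin n) (Fin n) ℝ) = S := rfl
  have huinv : ((u⁻¹ : (Matrix (Fin n) (Fin n) ℝ)ˣ) : Matrix (Fin n) (Fin n) ℝ) = S⁻¹ := rfl
  -- M := S * A * S is Hermitian and conjugate to B * A
  set M : Matrix (Fin n) (Fin n) ℝ := S * A * S with hM
  have hMherm : M.IsHermitian := by
    show Mᴴ = M
    rw [hM, conjTranspose_mul, conjTranspose_mul, hSherm.eq, hA.1.eq, mul_assoc]
  have hconj : (u : Matrix (Fin n) (Fin n) ℝ) * M * (↑u⁻¹ : Matrix (Fin n) (Fin n) ℝ) = B * A := by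
    rw [hucoe, huinv, hM]
    calc S * (S * A * S) * S⁻¹ = (S * S) * A * (S * S⁻¹) := by
          simp only [mul_assoc]
      _ = B * A := by rw [hSS, Matrix.mul_nonsing_inv S hSdet, mul_one]
  -- spectra agree
  have hspecM : spectrum ℝ M = spectrum ℝ (B * A) := by
    rw [← hconj, spectrum.units_conjugate]
  -- main computation using cfc
  intro t ht
  rw [hBA, ← hconj, aeval_units_conj', spectrum.units_conjugate, ← cfc_polynomial (1 - p) M hMherm,
    cfc_map_spectrum (fun x => (1 - p).eval x) M hMherm
      ((Polynomial.continuous _).continuousOn)] at ht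
  obtain ⟨s, hs, rfl⟩ := ht
  rw [hspecM] at hs
  obtain ⟨hp0, hpρ⟩ := hp s (hspec s hs)
  simp only [Polynomial.eval_sub, Polynomial.eval_one]
  constructor <;> linarith
end
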